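/- arXiv:1603.00854 — 7 statements merged into one kernel-verified Lean document; each statement's English description precedes it below -/
import Mathlib

section
/- Let Σ = {A_j : j ∈ J} be a finite set of real n×n matrices. If Σ is LCP then Σ is ℝⁿ-transversal, i.e., N_{J'} + R_{J'} = ℝⁿ for every subset J' ⊆ J. -/
open Filter Topology Matrix

attribute [local instance] Matrix.normedAddCommGroup

/-- Left products `L_m = A_{j_m} ⋯ A_{j_1}` (with `L_0 = I`). -/
noncomputable def leftProd {n k : ℕ} (A : Fin k → Matrix (Fin n) (Fin n) ℝ)
    (j : ℕ → Fin k) : ℕ → Matrix (Fin n) (Fin n) ℝ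
  | 0 => 1
  | m + 1 => A (j m) * leftProd A j m

/-- Right products `R_m = A_{j_1} ⋯ A_{j_m}` (with `R_0 = I`). -/
noncomputable def rightProd {n k : ℕ} (A : Fin k → Matrix (Fin n) (Fin n) ℝ)
    (j : ℕ → Fin k) : ℕ → Matrix (Fin n) (Fin n) ℝ
  | 0 => 1
  | m + 1 => rightProd A j m * A (j m)

/-- Σ is LCP: for every sequence of indices the left products converge. -/
def IsLCP {n k : ℕ} (A : Fin k → Matrix (Fin n) (Fin n) ℝ) : Prop :=
  ∀ j : ℕ → Fin k, ∃ L : Matrix (Fin n) (Fin n) ℝ,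
    Tendsto (leftProd A j) atTop (𝓝 L)

/-- Σ is RCP: for every sequence of indices the right products converge. -/
def IsRCP {n k : ℕ} (A : Fin k → Matrix (Fin n) (Fin n) ℝ) : Prop :=
  ∀ j : ℕ → Fin k, ∃ R : Matrix (Fin n) (Fin n) ℝ,
    Tendsto (rightProd A j) atTop (𝓝 R)

/-- `N_{J'} = ∩_{j ∈ J'} ker (I - A_j)`. -/
noncomputable def Nspace {n k : ℕ} (A : Fin k → Matrix (Fin n) (Fin n) ℝ)
    (J' : Set (Fin k)) : Submodule ℝ (Fin n → ℝ) :=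
  ⨅ j ∈ J', LinearMap.ker (Matrix.mulVecLin (1 - A j))

/-- `R_{J'} = span of ∪_{j ∈ J'} range (I - A_j)`. -/
noncomputable def Rspace {n k : ℕ} (A : Fin k → Matrix (Fin n) (Fin n) ℝ)
    (J' : Set (Fin k)) : Submodule ℝ (Fin n → ℝ) :=
  ⨆ j ∈ J', LinearMap.range (Matrix.mulVecLin (1 - A j))

/-- Σ is 0-transversal: `N_{J'} ∩ R_{J'} = {0}` for every `J' ⊆ J`. -/
def IsZeroTransversal {n k : ℕ} (A : Fin k → Matrix (Fin n) (Fin n) ℝ) : Prop :=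
  ∀ J' : Set (Fin k), Nspace A J' ⊓ Rspace A J' = ⊥

/-- Σ is ℝⁿ-transversal: `N_{J'} + R_{J'} = ℝⁿ` for every `J' ⊆ J`. -/
def IsRnTransversal {n k : ℕ} (A : Fin k → Matrix (Fin n) (Fin n) ℝ) : Prop :=
  ∀ J' : Set (Fin k), Nspace A J' ⊔ Rspace A J' = ⊤

/-- Σ is transversal: `N_{J'} ⊕ R_{J'} = ℝⁿ` for every `J' ⊆ J`. -/
def IsTransversal {n k : ℕ} (A : Fin k → Matrix (Fin n) (Fin n) ℝ) : Prop :=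
  IsZeroTransversal A ∧ IsRnTransversal A

set_option maxHeartbeats 1000000 in
/-- If Σ is LCP then Σ is ℝⁿ-transversal. -/
theorem lcp_imp_rn_transversal {n k : ℕ} (A : Fin k → Matrix (Fin n) (Fin n) ℝ)
    (hLCP : IsLCP A) : IsRnTransversal A := by
  intro J'
  rcases J'.eq_empty_or_nonempty with rfl | ⟨i₀, hi₀⟩
  · have hN : Nspace A (∅ : Set (Fin k)) = ⊤ := by simp [Nspace]
    rw [hN, top_sup_eq]
  · classical
    have hk : 0 < k := i₀.pos
    set j : ℕ → Fin k := fun m =>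
      if (⟨m % k, Nat.mod_lt _ hk⟩ : Fin k) ∈ J' then ⟨m % k, Nat.mod_lt _ hk⟩ else i₀ with hj
    have hj_mem : ∀ m, j m ∈ J' := by
      intro m
      by_cases h : (⟨m % k, Nat.mod_lt _ hk⟩ : Fin k) ∈ J' <;> simp [hj, h, hi₀]
    have hj_hit : ∀ i ∈ J', ∀ t, j (i.val + t * k) = i := by
      intro i hi t
      have hmod : (i.val + t * k) % k = i.val := by
        rw [Nat.add_mul_mod_self_right, Nat.mod_eq_of_lt i.isLt]
      have key : (⟨(i.val + t * k) % k, Nat.mod_lt _ hk⟩ : Fin k) = i := by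
        ext; simp [hmod]
      show (if (⟨(i.val + t * k) % k, Nat.mod_lt _ hk⟩ : Fin k) ∈ J'
          then (⟨(i.val + t * k) % k, Nat.mod_lt _ hk⟩ : Fin k) else i₀) = i
      rw [key, if_pos hi]
    obtain ⟨L, hL⟩ := hLCP j
    -- the limit is fixed by each A i, i ∈ J'
    have hfix : ∀ i ∈ J', A i * L = L := by
      intro i hi
      have htend : Tendsto (fun t : ℕ => i.val + t * k) atTop atTop :=
        tendsto_atTop_mono (fun t => le_trans (Nat.le_mul_of_pos_right t hk) (Nat.le_add_left _ _)) tendsto_id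
      have h1 : Tendsto (fun t => leftProd A j (i.val + t * k)) atTop (𝓝 L) :=
        hL.comp htend
      have h2 : Tendsto (fun t => leftProd A j (i.val + t * k + 1)) atTop (𝓝 L) :=
        hL.comp (tendsto_atTop_mono (fun t => Nat.le_succ _) htend)
      have h2' : Tendsto (fun t => A i * leftProd A j (i.val + t * k)) atTop (𝓝 L) := by
        refine h2.congr fun t => ?_
        rw [leftProd, hj_hit i hi t]
      have h3 : Tendsto (fun t => A i * leftProd A j (i.val + t * k)) atTop (𝓝 (A i * L)) :=
        ((continuous_const.matrix_mul continuous_id).tendsto L).comp h1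
      exact tendsto_nhds_unique h3 h2'
    -- x - L_m x ∈ Rspace for all m
    have hRmem : ∀ (x : Fin n → ℝ) (m : ℕ), x - leftProd A j m *ᵥ x ∈ Rspace A J' := by
      intro x m
      induction m with
      | zero => simp [leftProd]
      | succ m ih =>
        have key : x - leftProd A j (m + 1) *ᵥ x
            = (x - leftProd A j m *ᵥ x) + (1 - A (j m)) *ᵥ (leftProd A j m *ᵥ x) := by
          rw [leftProd, Matrix.sub_mulVec, Matrix.one_mulVec, ← Matrix.mulVec_mulVec]
          abel
        rw [key]
        refine (Rspace A J').add_mem ih ?_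
        have : (1 - A (j m)) *ᵥ (leftProd A j m *ᵥ x)
            ∈ LinearMap.range (Matrix.mulVecLin (1 - A (j m))) :=
          ⟨leftProd A j m *ᵥ x, rfl⟩
        exact le_iSup₂ (f := fun i (_ : i ∈ J') =>
          LinearMap.range (Matrix.mulVecLin (1 - A i))) (j m) (hj_mem m) this
    rw [eq_top_iff]
    intro x _
    have hNx : L *ᵥ x ∈ Nspace A J' := by
      refine (Submodule.mem_iInf _).mpr fun i => (Submodule.mem_iInf _).mpr fun hi => ?_
      have h0 : (1 - A i) * L = 0 := by
        rw [sub_mul, one_mul, hfix i hi, sub_self]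
      simp only [LinearMap.mem_ker, Matrix.mulVecLin_apply]
      rw [Matrix.mulVec_mulVec, h0, Matrix.zero_mulVec]
    have hRx : x - L *ᵥ x ∈ Rspace A J' := by
      have hclosed : IsClosed ((Rspace A J' : Submodule ℝ (Fin n → ℝ)) : Set (Fin n → ℝ)) :=
        (Rspace A J').closed_of_finiteDimensional
      have htend : Tendsto (fun m => x - leftProd A j m *ᵥ x) atTop (𝓝 (x - L *ᵥ x)) := by
        have : Tendsto (fun m => leftProd A j m *ᵥ x) atTop (𝓝 (L *ᵥ x)) :=
          ((continuous_id.matrix_mulVec continuous_const).tendsto L).comp hL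
        exact tendsto_const_nhds.sub this
      exact hclosed.mem_of_tendsto htend (Filter.Eventually.of_forall fun m => hRmem x m)
    have : x = L *ᵥ x + (x - L *ᵥ x) := by abel
    rw [this]
    exact Submodule.add_mem_sup hNx hRx
end

section
/- Let Σ = {A_j : j ∈ J} be a finite set of real n×n matrices. If Σ is RCP then Σ is 0-transversal, i.e., N_{J'} ∩ R_{J'} = {0} for every subset J' ⊆ J. -/
open Filter Topology Matrix

attribute [local instance] Matrix.normedAddCommGroup

/-- If Σ is RCP then Σ is 0-transversal. -/
theorem rcp_imp_zero_transversal {n k : ℕ} (A : Fin k → Matrix (Fin n) (Fin n) ℝ)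
    (hRCP : IsRCP A) : IsZeroTransversal A := by
  classical
  intro J'
  rcases Set.eq_empty_or_nonempty J' with rfl | ⟨c₀, hc₀⟩
  · have hR : Rspace A (∅ : Set (Fin k)) = ⊥ := by simp [Rspace]
    rw [hR, inf_bot_eq]
  · have hk : 0 < k := c₀.pos
    set j : ℕ → Fin k := fun m =>
      if (⟨m % k, Nat.mod_lt m hk⟩ : Fin k) ∈ J' then (⟨m % k, Nat.mod_lt m hk⟩ : Fin k)
      else c₀ with hj
    have hjmem : ∀ m, j m ∈ J' := by
      intro m
      by_cases h : (⟨m % k, Nat.mod_lt m hk⟩ : Fin k) ∈ J' <;> simp [hj, h, hc₀]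
    obtain ⟨L, hL⟩ := hRCP j
    have hcont : ∀ w : Fin n → ℝ,
        Tendsto (fun m => rightProd A j m *ᵥ w) atTop (𝓝 (L *ᵥ w)) := by
      intro w
      have hφ : Continuous (fun M : Matrix (Fin n) (Fin n) ℝ => M *ᵥ w) := by
        let φ : Matrix (Fin n) (Fin n) ℝ →ₗ[ℝ] (Fin n → ℝ) :=
          { toFun := fun M => M *ᵥ w
            map_add' := fun M N => Matrix.add_mulVec M N w
            map_smul' := fun r M => Matrix.smul_mulVec r M w }
        exact φ.continuous_of_finiteDimensional
      exact ((hφ.tendsto L).comp hL)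
    -- `L * A c = L` (as actions on vectors) for every `c ∈ J'`
    have hfix : ∀ c ∈ J', ∀ y : Fin n → ℝ, L *ᵥ (A c *ᵥ y) = L *ᵥ y := by
      intro c hc y
      have hm : Tendsto (fun t => (c : ℕ) + t * k) atTop atTop := by
        refine tendsto_atTop_mono (fun t => ?_) tendsto_id
        calc (t : ℕ) = t * 1 := (mul_one t).symm
          _ ≤ t * k := Nat.mul_le_mul_left t hk
          _ ≤ (c : ℕ) + t * k := Nat.le_add_left _ _
      have hm1 : Tendsto (fun t => (c : ℕ) + t * k + 1) atTop atTop := by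
        refine tendsto_atTop_mono (fun t => ?_) hm
        exact Nat.le_succ _
      have hjc : ∀ t, j ((c : ℕ) + t * k) = c := by
        intro t
        have hmod : ((c : ℕ) + t * k) % k = (c : ℕ) := by
          rw [Nat.add_mul_mod_self_right, Nat.mod_eq_of_lt c.isLt]
        have hfin : (⟨((c : ℕ) + t * k) % k, Nat.mod_lt _ hk⟩ : Fin k) = c := by
          apply Fin.ext; exact hmod
        simp only [hj]
        rw [hfin]
        simp [hc]
      have h1 : Tendsto (fun t => rightProd A j ((c : ℕ) + t * k) *ᵥ (A c *ᵥ y))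
          atTop (𝓝 (L *ᵥ (A c *ᵥ y))) := (hcont (A c *ᵥ y)).comp hm
      have h2 : Tendsto (fun t => rightProd A j ((c : ℕ) + t * k + 1) *ᵥ y)
          atTop (𝓝 (L *ᵥ y)) := (hcont y).comp hm1
      have heq : ∀ t, rightProd A j ((c : ℕ) + t * k + 1) *ᵥ y
          = rightProd A j ((c : ℕ) + t * k) *ᵥ (A c *ᵥ y) := by
        intro t
        show (rightProd A j ((c : ℕ) + t * k) * A (j ((c : ℕ) + t * k))) *ᵥ y = _
        rw [hjc t, ← Matrix.mulVec_mulVec]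
      rw [show (fun t => rightProd A j ((c : ℕ) + t * k + 1) *ᵥ y)
          = (fun t => rightProd A j ((c : ℕ) + t * k) *ᵥ (A c *ᵥ y)) from funext heq] at h2
      exact tendsto_nhds_unique h1 h2
    rw [eq_bot_iff]
    intro x hx
    obtain ⟨hxN, hxR⟩ := Submodule.mem_inf.mp hx
    have hNfix : ∀ c ∈ J', A c *ᵥ x = x := by
      intro c hc
      have h1 := (Submodule.mem_iInf _).mp hxN c
      have h2 := (Submodule.mem_iInf _).mp h1 hc
      have h0 : (1 - A c) *ᵥ x = 0 := h2
      rw [Matrix.sub_mulVec, Matrix.one_mulVec, sub_eq_zero] at h0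
      exact h0.symm
    have hRx : ∀ m, rightProd A j m *ᵥ x = x := by
      intro m
      induction m with
      | zero => simp [rightProd]
      | succ m ih =>
        show (rightProd A j m * A (j m)) *ᵥ x = x
        rw [← Matrix.mulVec_mulVec, hNfix _ (hjmem m), ih]
    have hLx : L *ᵥ x = x := by
      refine tendsto_nhds_unique (hcont x) ?_
      rw [show (fun m => rightProd A j m *ᵥ x) = (fun _ => x) from funext hRx]
      exact tendsto_const_nhds
    have hLR : Rspace A J' ≤ LinearMap.ker (Matrix.mulVecLin L) := by
      refine iSup₂_le fun c hc => ?_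
      rintro v ⟨y, rfl⟩
      show L *ᵥ ((1 - A c) *ᵥ y) = 0
      rw [Matrix.sub_mulVec, Matrix.one_mulVec, Matrix.mulVec_sub, hfix c hc y, sub_self]
    have h0 : L *ᵥ x = 0 := hLR hxR
    rw [Submodule.mem_bot, ← hLx, h0]
end

section
/- Let Σ = {A_j : j ∈ J} be a finite set of real n×n matrices. If Σ is LCP and 0-transversal, then Σ is RCP. -/
open Filter Topology Matrix

attribute [local instance] Matrix.normedAddCommGroup

namespace RCPProof

variable {n k : ℕ}

/-- The continuous linear map associated to a matrix. -/
noncomputable def matCLM :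
    Matrix (Fin n) (Fin n) ℝ ≃ₗ[ℝ] ((Fin n → ℝ) →L[ℝ] (Fin n → ℝ)) :=
  Matrix.toLin'.trans LinearMap.toContinuousLinearMap

lemma matCLM_apply (M : Matrix (Fin n) (Fin n) ℝ) (x : Fin n → ℝ) :
    matCLM M x = M.mulVec x := by
  simp [matCLM, Matrix.toLin'_apply]

lemma matCLM_mul (M N : Matrix (Fin n) (Fin n) ℝ) :
    matCLM (M * N) = matCLM M * matCLM N := by
  ext x
  simp [matCLM_apply, ContinuousLinearMap.mul_apply, Matrix.mulVec_mulVec]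

lemma matCLM_one : matCLM (1 : Matrix (Fin n) (Fin n) ℝ) = 1 := by
  ext x
  simp [matCLM_apply, Matrix.one_mulVec]


variable (A : Fin k → Matrix (Fin n) (Fin n) ℝ)

/-- the matrices as continuous linear maps -/
noncomputable def fc (a : Fin k) : (Fin n → ℝ) →L[ℝ] (Fin n → ℝ) := matCLM (A a)

/-- product of a word -/
noncomputable def wp (l : List (Fin k)) : (Fin n → ℝ) →L[ℝ] (Fin n → ℝ) :=
  (l.map (fc A)).prod

@[simp] lemma wp_nil : wp A [] = 1 := rfl

@[simp] lemma wp_cons (a : Fin k) (l : List (Fin k)) :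
    wp A (a :: l) = fc A a * wp A l := by
  simp [wp]

lemma wp_append (l₁ l₂ : List (Fin k)) :
    wp A (l₁ ++ l₂) = wp A l₁ * wp A l₂ := by
  simp [wp]

/-- prefix word of a sequence -/
def pfx (d : ℕ → Fin k) (m : ℕ) : List (Fin k) := (List.range m).map d

@[simp] lemma pfx_zero (d : ℕ → Fin k) : pfx d 0 = [] := rfl

lemma pfx_succ (d : ℕ → Fin k) (m : ℕ) :
    pfx d (m + 1) = pfx d m ++ [d m] := by
  simp [pfx, List.range_succ]

lemma leftProd_eq (j : ℕ → Fin k) (m : ℕ) :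
    matCLM (leftProd A j m) = wp A ((pfx j m).reverse) := by
  induction m with
  | zero => simpa [leftProd] using matCLM_one
  | succ m ih =>
      rw [leftProd, matCLM_mul, ih, pfx_succ, List.reverse_append]
      simp [wp_append, fc]

lemma rightProd_eq (j : ℕ → Fin k) (m : ℕ) :
    matCLM (rightProd A j m) = wp A (pfx j m) := by
  induction m with
  | zero => simpa [rightProd] using matCLM_one
  | succ m ih =>
      rw [rightProd, matCLM_mul, ih, pfx_succ, wp_append]
      simp [fc]

/-- LCP in CLM language -/
lemma lcp' (hLCP : IsLCP A) (d : ℕ → Fin k) :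
    ∃ L, Tendsto (fun m => wp A ((pfx d m).reverse)) atTop (𝓝 L) := by
  obtain ⟨L, hL⟩ := hLCP d
  refine ⟨matCLM L, ?_⟩
  have hc : Continuous (matCLM (n := n)) :=
    (matCLM.toContinuousLinearEquiv).continuous
  have h2 := (hc.tendsto L).comp hL
  have he : (⇑matCLM ∘ leftProd A d) = fun m => wp A ((pfx d m).reverse) :=
    funext fun m => leftProd_eq A d m
  rwa [he] at h2

end RCPProof

namespace RCPProof

variable {k : ℕ}

/-- concatenation of the first `i` blocks -/
def bigL (g : ℕ → List (Fin k)) (i : ℕ) : List (Fin k) := (List.range i).flatMap g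

@[simp] lemma bigL_zero (g : ℕ → List (Fin k)) : bigL g 0 = [] := rfl

lemma bigL_succ (g : ℕ → List (Fin k)) (i : ℕ) :
    bigL g (i + 1) = bigL g i ++ g i := by
  simp [bigL, List.range_succ]

lemma bigL_prefix (g : ℕ → List (Fin k)) {i i' : ℕ} (h : i ≤ i') :
    bigL g i <+: bigL g i' := by
  induction i' with
  | zero =>
      have hi : i = 0 := by omega
      subst hi; exact List.prefix_refl _
  | succ m ih =>
      rcases Nat.lt_or_ge i (m+1) with h1 | h1
      · exact (ih (by omega)).trans (by rw [bigL_succ]; exact List.prefix_append _ _)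
      · have : i = m + 1 := by omega
        subst this; exact List.prefix_refl _

lemma bigL_len_ge (g : ℕ → List (Fin k)) (hg : ∀ t, g t ≠ []) (i : ℕ) :
    i ≤ (bigL g i).length := by
  induction i with
  | zero => simp
  | succ m ih =>
      rw [bigL_succ, List.length_append]
      have := List.length_pos_iff.mpr (hg m)
      omega

/-- the infinite concatenation of blocks, as a sequence -/
def seqOf (x0 : Fin k) (g : ℕ → List (Fin k)) (m : ℕ) : Fin k :=
  (bigL g (m + 1)).getD m x0

lemma seqOf_eq_getElem (x0 : Fin k) (g : ℕ → List (Fin k)) (hg : ∀ t, g t ≠ [])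
    {m i : ℕ} (hm : m < (bigL g i).length) :
    seqOf x0 g m = (bigL g i)[m] := by
  unfold seqOf
  have hm1 : m < (bigL g (m+1)).length := lt_of_lt_of_le (Nat.lt_succ_self m) (bigL_len_ge g hg _)
  rw [List.getD_eq_getElem _ _ hm1]
  rcases le_total (m+1) i with h | h
  · exact (bigL_prefix g h).getElem hm1
  · exact ((bigL_prefix g h).getElem hm).symm

lemma pfx_seqOf (x0 : Fin k) (g : ℕ → List (Fin k)) (hg : ∀ t, g t ≠ []) (i : ℕ) :
    pfx (seqOf x0 g) ((bigL g i).length) = bigL g i := by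
  apply List.ext_getElem
  · simp [pfx]
  · intro m hm1 hm2
    have hm : m < (bigL g i).length := hm2
    have : (pfx (seqOf x0 g) ((bigL g i).length))[m] = seqOf x0 g m := by
      simp [pfx]
    rw [this, seqOf_eq_getElem x0 g hg hm]

lemma seqOf_mem_prop (x0 : Fin k) (g : ℕ → List (Fin k)) (hg : ∀ t, g t ≠ [])
    (P : Fin k → Prop) (hP : ∀ t, ∀ a ∈ g t, P a) (m : ℕ) :
    P (seqOf x0 g m) := by
  have hm1 : m < (bigL g (m+1)).length := lt_of_lt_of_le (Nat.lt_succ_self m) (bigL_len_ge g hg _)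
  rw [seqOf_eq_getElem x0 g hg hm1]
  have : (bigL g (m+1))[m] ∈ bigL g (m+1) := List.getElem_mem _
  rcases List.mem_flatMap.mp this with ⟨t, _, hmem⟩
  exact hP t _ hmem

lemma seqOf_frequently (x0 : Fin k) (g : ℕ → List (Fin k)) (hg : ∀ t, g t ≠ [])
    (a : Fin k) (ha : ∀ t, a ∈ g t) :
    ∀ N, ∃ m ≥ N, seqOf x0 g m = a := by
  intro N
  obtain ⟨idx, hidx, hval⟩ := List.getElem_of_mem (ha N)
  refine ⟨(bigL g N).length + idx, le_trans (bigL_len_ge g hg N) (Nat.le_add_right _ _), ?_⟩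
  have hlen : (bigL g N).length + idx < (bigL g (N+1)).length := by
    rw [bigL_succ, List.length_append]; omega
  rw [seqOf_eq_getElem x0 g hg hlen]
  rw [List.getElem_of_eq (bigL_succ g N)]
  rw [List.getElem_append_right (by omega)]
  simpa using hval

end RCPProof

namespace RCPProof

variable {n k : ℕ} (A : Fin k → Matrix (Fin n) (Fin n) ℝ)

/-- subspace of vectors with bounded product orbit -/
noncomputable def Vsub : Submodule ℝ (Fin n → ℝ) where
  carrier := {v | ∃ C, ∀ l : List (Fin k), ‖wp A l v‖ ≤ C}
  add_mem' := by
    rintro x y ⟨C1, h1⟩ ⟨C2, h2⟩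
    exact ⟨C1 + C2, fun l => by
      calc ‖wp A l (x + y)‖ = ‖wp A l x + wp A l y‖ := by rw [map_add]
        _ ≤ ‖wp A l x‖ + ‖wp A l y‖ := norm_add_le _ _
        _ ≤ C1 + C2 := add_le_add (h1 l) (h2 l)⟩
  zero_mem' := ⟨0, fun l => by simp⟩
  smul_mem' := by
    rintro c x ⟨C, h⟩
    exact ⟨|c| * C, fun l => by
      rw [(wp A l).map_smul]
      have : ‖c • wp A l x‖ = |c| * ‖wp A l x‖ := by
        rw [norm_smul]; simp [Real.norm_eq_abs]
      rw [this]
      exact mul_le_mul_of_nonneg_left (h l) (abs_nonneg c)⟩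

lemma exists_KV : ∃ KV : ℝ, 1 ≤ KV ∧ ∀ v ∈ Vsub A, ∀ l : List (Fin k),
    ‖wp A l v‖ ≤ KV * ‖v‖ := by
  classical
  set V := Vsub A
  have : FiniteDimensional ℝ V := inferInstance
  let b := Module.finBasis ℝ V
  set r := Module.finrank ℝ V
  -- coordinate functionals are bounded
  have hcoord : ∀ i : Fin r, ∃ K : ℝ, 0 ≤ K ∧ ∀ v : V, |b.repr v i| ≤ K * ‖v‖ := by
    intro i
    let φ : V →ₗ[ℝ] ℝ := (Finsupp.lapply i).comp (b.repr.toLinearMap)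
    let φc := LinearMap.toContinuousLinearMap φ
    refine ⟨‖φc‖, norm_nonneg φc, fun v => ?_⟩
    have := φc.le_opNorm v
    simpa [φc, φ, Real.norm_eq_abs] using this
  choose K hK0 hK using hcoord
  -- bound for each basis vector
  have hC : ∀ i : Fin r, ∃ C : ℝ, 0 ≤ C ∧ ∀ l : List (Fin k), ‖wp A l (b i : Fin n → ℝ)‖ ≤ C := by
    intro i
    obtain ⟨C, hCb⟩ := (b i).2
    exact ⟨max C 0, le_max_right _ _, fun l => le_trans (hCb l) (le_max_left _ _)⟩
  choose C hC0 hCb using hC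
  have hsum0 : (0:ℝ) ≤ ∑ i, K i * C i :=
    Finset.sum_nonneg (fun i _ => mul_nonneg (hK0 i) (hC0 i))
  refine ⟨1 + ∑ i, K i * C i, by linarith, ?_⟩
  intro v hv l
  set vV : V := ⟨v, hv⟩
  have hrepr : (∑ i, b.repr vV i • b i) = vV := b.sum_repr vV
  have hval : v = ∑ i, b.repr vV i • (b i : Fin n → ℝ) := by
    have := congrArg (Subtype.val) hrepr
    rw [Submodule.coe_sum] at this
    simp only [Submodule.coe_smul] at this
    exact this.symm
  calc ‖wp A l v‖ = ‖∑ i, b.repr vV i • wp A l (b i : Fin n → ℝ)‖ := by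
        rw [hval, map_sum]
        congr 1
        exact Finset.sum_congr rfl (fun i _ => (wp A l).map_smul _ _)
    _ ≤ ∑ i, ‖b.repr vV i • wp A l (b i : Fin n → ℝ)‖ := norm_sum_le _ _
    _ ≤ ∑ i, (K i * ‖v‖) * C i := by
        apply Finset.sum_le_sum
        intro i _
        rw [norm_smul, Real.norm_eq_abs]
        have h1 : |b.repr vV i| ≤ K i * ‖v‖ := by
          have := hK i vV
          simpa using this
        exact mul_le_mul h1 (hCb i l) (norm_nonneg _) (mul_nonneg (hK0 i) (norm_nonneg v))
    _ = (∑ i, K i * C i) * ‖v‖ := by rw [Finset.sum_mul]; congr 1; funext i; ring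
    _ ≤ (1 + ∑ i, K i * C i) * ‖v‖ := by
        apply mul_le_mul_of_nonneg_right _ (norm_nonneg _)
        linarith

/-- the walk along suffixes -/
noncomputable def yseq (r : List (Fin k)) (v : Fin n → ℝ) (i : ℕ) : Fin n → ℝ :=
  wp A ((r.take i).reverse) v

lemma yseq_zero (r : List (Fin k)) (v : Fin n → ℝ) : yseq A r v 0 = v := by
  simp [yseq]

lemma yseq_succ (r : List (Fin k)) (v : Fin n → ℝ) (i : ℕ) (hi : i < r.length) :
    yseq A r v (i+1) = fc A (r[i]) (yseq A r v i) := by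
  unfold yseq
  have : r.take (i+1) = r.take i ++ [r[i]] := by
    rw [List.take_succ, List.getElem?_eq_getElem hi]
    rfl
  rw [this, List.reverse_append]
  simp [wp_append, ContinuousLinearMap.mul_apply]

lemma yseq_last (r : List (Fin k)) (v : Fin n → ℝ) :
    yseq A r v r.length = wp A r.reverse v := by
  simp [yseq]

/-- Claim 3: from an unbounded vector, find a word making it big while staying unbounded -/
lemma claim3 (KV α : ℝ) (hKV1 : 1 ≤ KV) (hα1 : 1 ≤ α)
    (hKV : ∀ v ∈ Vsub A, ∀ l : List (Fin k), ‖wp A l v‖ ≤ KV * ‖v‖)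
    (hα : ∀ (a : Fin k) (x : Fin n → ℝ), ‖fc A a x‖ ≤ α * ‖x‖)
    (v : Fin n → ℝ) (hv : v ∉ Vsub A) (T : ℝ) (hT : ‖v‖ < T) :
    ∃ l : List (Fin k), l ≠ [] ∧ wp A l v ∉ Vsub A ∧ T ≤ ‖wp A l v‖ := by
  classical
  have hTpos : 0 < T := lt_of_le_of_lt (norm_nonneg v) hT
  -- get a word with huge value
  have hbig : ∃ l : List (Fin k), KV * (α * T) < ‖wp A l v‖ := by
    by_contra hcon
    push_neg at hcon
    exact hv ⟨KV * (α * T), hcon⟩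
  obtain ⟨l₀, hl₀⟩ := hbig
  set r := l₀.reverse with hr
  have hwr : wp A r.reverse v = wp A l₀ v := by rw [hr, List.reverse_reverse]
  -- find first index where the walk exceeds T
  have hchain : T ≤ KV * (α * T) := by
    have h1 : T ≤ α * T := le_mul_of_one_le_left (le_of_lt hTpos) hα1
    have h2 : α * T ≤ KV * (α * T) := le_mul_of_one_le_left (by linarith) hKV1
    linarith
  have hex : ∃ i, T ≤ ‖yseq A r v i‖ := by
    refine ⟨r.length, ?_⟩
    rw [yseq_last, hwr]
    linarith
  let i := Nat.find hex
  have hPi : T ≤ ‖yseq A r v i‖ := Nat.find_spec hex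
  have hipos : 0 < i := by
    rcases Nat.eq_zero_or_pos i with h0 | h
    · exfalso
      have := hPi
      rw [h0, yseq_zero] at this
      linarith
    · exact h
  have hile : i ≤ r.length := by
    by_contra hgt
    push_neg at hgt
    have hlt : r.length < i := hgt
    have := Nat.find_min hex hlt
    rw [yseq_last, hwr] at this
    exact this (by linarith)
  have hprev : ‖yseq A r v (i-1)‖ < T := by
    have := Nat.find_min hex (Nat.sub_lt hipos one_pos)
    linarith [not_le.mp this]
  have hstep : ‖yseq A r v i‖ ≤ α * T := by
    have hi1 : i - 1 < r.length := by omega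
    have heq : (i - 1) + 1 = i := by omega
    have h2 := yseq_succ A r v (i-1) hi1
    rw [heq] at h2
    rw [h2]
    calc ‖fc A (r[i-1]) (yseq A r v (i-1))‖ ≤ α * ‖yseq A r v (i-1)‖ := hα _ _
      _ ≤ α * T := by nlinarith
  set s := (r.take i).reverse with hs
  have hys : yseq A r v i = wp A s v := rfl
  have hsne : s ≠ [] := by
    intro hemp
    have : (r.take i).length = 0 := by rw [← List.length_reverse, ← hs, hemp]; rfl
    rw [List.length_take] at this
    have : i = 0 ∨ r.length = 0 := by omega
    rcases this with h | h
    · omega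
    · omega
  refine ⟨s, hsne, ?_, by rw [← hys]; exact hPi⟩
  -- if wp s v were bounded, the full word value would be small
  intro hmem
  have hsplit : wp A l₀ v = wp A ((r.drop i).reverse) (wp A s v) := by
    have h1 : l₀ = (r.drop i).reverse ++ (r.take i).reverse := by
      rw [hr]
      rw [← List.reverse_append, List.take_append_drop, List.reverse_reverse]
    rw [h1, wp_append, ContinuousLinearMap.mul_apply, ← hs]
  have hb := hKV _ hmem ((r.drop i).reverse)
  rw [← hsplit] at hb
  have : ‖wp A s v‖ ≤ α * T := by rw [← hys]; exact hstep
  have hfin : ‖wp A l₀ v‖ ≤ KV * (α * T) := by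
    calc ‖wp A l₀ v‖ ≤ KV * ‖wp A s v‖ := hb
      _ ≤ KV * (α * T) := by nlinarith
  linarith

end RCPProof

namespace RCPProof

variable {n k : ℕ} (A : Fin k → Matrix (Fin n) (Fin n) ℝ)

lemma vsub_top (hLCP : IsLCP A) : Vsub A = ⊤ := by
  classical
  by_contra hne
  have hv0 : ∃ v0, v0 ∉ Vsub A := by
    by_contra hall
    push_neg at hall
    exact hne (Submodule.eq_top_iff'.mpr hall)
  obtain ⟨v0, hv0⟩ := hv0
  obtain ⟨KV, hKV1, hKV⟩ := exists_KV A
  set α : ℝ := 1 + ∑ a : Fin k, ‖fc A a‖ with hαdef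
  have hα1 : 1 ≤ α := by
    have : (0:ℝ) ≤ ∑ a : Fin k, ‖fc A a‖ := Finset.sum_nonneg (fun a _ => norm_nonneg _)
    simp only [hαdef]; linarith
  have hα : ∀ (a : Fin k) (x : Fin n → ℝ), ‖fc A a x‖ ≤ α * ‖x‖ := by
    intro a x
    have h1 : ‖fc A a x‖ ≤ ‖fc A a‖ * ‖x‖ := (fc A a).le_opNorm x
    have h2 : ‖fc A a‖ ≤ α := by
      have : ‖fc A a‖ ≤ ∑ b : Fin k, ‖fc A b‖ :=
        Finset.single_le_sum (fun b _ => norm_nonneg (fc A b)) (Finset.mem_univ a)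
      simp only [hαdef]; linarith
    calc ‖fc A a x‖ ≤ ‖fc A a‖ * ‖x‖ := h1
      _ ≤ α * ‖x‖ := mul_le_mul_of_nonneg_right h2 (norm_nonneg x)
  have hstep : ∀ (t : ℕ) (v : Fin n → ℝ), v ∉ Vsub A →
      ∃ l : List (Fin k), l ≠ [] ∧ wp A l v ∉ Vsub A ∧ ‖v‖ + t + 1 ≤ ‖wp A l v‖ := by
    intro t v hv
    have := claim3 A KV α hKV1 hα1 hKV hα v hv (‖v‖ + t + 1)
      (by linarith [show (0:ℝ) ≤ (t:ℝ) from Nat.cast_nonneg t])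
    obtain ⟨l, h1, h2, h3⟩ := this
    exact ⟨l, h1, h2, h3⟩
  let F : ℕ → (Fin n → ℝ) → List (Fin k) := fun t v =>
    if h : v ∉ Vsub A then (hstep t v h).choose else []
  let st : ℕ → (Fin n → ℝ) := fun t => Nat.rec v0 (fun t v => wp A (F t v) v) t
  have hst0 : st 0 = v0 := rfl
  have hstS : ∀ t, st (t+1) = wp A (F t (st t)) (st t) := fun t => rfl
  have hinv : ∀ t, st t ∉ Vsub A ∧ ((t:ℝ) - 1 ≤ ‖st t‖) := by
    intro t
    induction t with
    | zero => exact ⟨hv0, by simp [hst0]; linarith [norm_nonneg v0]⟩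
    | succ t ih =>
        obtain ⟨hmem, hnorm⟩ := ih
        have hF : F t (st t) = (hstep t (st t) hmem).choose := dif_pos hmem
        obtain ⟨hne', hmem', hbig⟩ := (hstep t (st t) hmem).choose_spec
        rw [hstS, hF]
        refine ⟨hmem', ?_⟩
        push_cast
        have h0 : (0:ℝ) ≤ ‖st t‖ := norm_nonneg _
        linarith
  have hFne : ∀ t, F t (st t) ≠ [] := by
    intro t
    have hmem := (hinv t).1
    have hF : F t (st t) = (hstep t (st t) hmem).choose := dif_pos hmem
    rw [hF]
    exact (hstep t (st t) hmem).choose_spec.1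
  set g : ℕ → List (Fin k) := fun t => (F t (st t)).reverse with hg
  have hgne : ∀ t, g t ≠ [] := by
    intro t h
    exact hFne t (by rwa [← List.reverse_eq_nil_iff])
  have hmile : ∀ t, wp A ((bigL g t).reverse) v0 = st t := by
    intro t
    induction t with
    | zero => simp [hst0]
    | succ t ih =>
        rw [bigL_succ, List.reverse_append, wp_append, ContinuousLinearMap.mul_apply]
        have : (g t).reverse = F t (st t) := by rw [hg]; simp
        rw [this, ih, ← hstS]
  obtain ⟨x0, -⟩ := List.exists_mem_of_ne_nil _ (hgne 0)
  set d := seqOf x0 g with hd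
  obtain ⟨L, hL⟩ := lcp' A hLCP d
  have hbdd : BddAbove (Set.range (fun m => ‖wp A ((pfx d m).reverse)‖)) :=
    (hL.norm).bddAbove_range
  obtain ⟨C, hC⟩ := hbdd
  have hCb : ∀ m, ‖wp A ((pfx d m).reverse)‖ ≤ C := by
    intro m
    exact hC (Set.mem_range_self m)
  obtain ⟨t, ht⟩ := exists_nat_gt (C * ‖v0‖ + 1)
  have h1 : (t:ℝ) - 1 ≤ ‖st t‖ := (hinv t).2
  have h2 : st t = wp A ((pfx d ((bigL g t).length)).reverse) v0 := by
    rw [hd, pfx_seqOf x0 g hgne t, hmile]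
  have h3 : ‖st t‖ ≤ C * ‖v0‖ := by
    rw [h2]
    calc ‖wp A ((pfx d ((bigL g t).length)).reverse) v0‖
        ≤ ‖wp A ((pfx d ((bigL g t).length)).reverse)‖ * ‖v0‖ := ContinuousLinearMap.le_opNorm _ _
      _ ≤ C * ‖v0‖ := mul_le_mul_of_nonneg_right (hCb _) (norm_nonneg _)
  linarith

lemma exists_B (hLCP : IsLCP A) :
    ∃ B : ℝ, 1 ≤ B ∧ ∀ l : List (Fin k), ‖wp A l‖ ≤ B := by
  obtain ⟨KV, hKV1, hKV⟩ := exists_KV A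
  refine ⟨KV, hKV1, fun l => ?_⟩
  apply ContinuousLinearMap.opNorm_le_bound _ (by linarith)
  intro x
  exact hKV x (by rw [vsub_top A hLCP]; trivial) l

end RCPProof

namespace RCPProof

variable {n k : ℕ} (A : Fin k → Matrix (Fin n) (Fin n) ℝ)

lemma sub_mulVecLin_apply (a : Fin k) (x : Fin n → ℝ) :
    Matrix.mulVecLin (1 - A a) x = x - fc A a x := by
  simp [Matrix.mulVecLin_apply, Matrix.sub_mulVec, Matrix.one_mulVec, fc, matCLM_apply]

lemma mem_N_iff (S : Set (Fin k)) (x : Fin n → ℝ) :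
    x ∈ Nspace A S ↔ ∀ a ∈ S, fc A a x = x := by
  unfold Nspace
  rw [Submodule.mem_iInf]
  constructor
  · intro h a ha
    have := (Submodule.mem_iInf _).mp (h a) ha
    rw [LinearMap.mem_ker, sub_mulVecLin_apply] at this
    have := sub_eq_zero.mp this
    exact this.symm
  · intro h a
    rw [Submodule.mem_iInf]
    intro ha
    rw [LinearMap.mem_ker, sub_mulVecLin_apply, h a ha, sub_self]

lemma sub_mem_R (S : Set (Fin k)) (a : Fin k) (ha : a ∈ S) (x : Fin n → ℝ) :
    x - fc A a x ∈ Rspace A S := by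
  have h1 : x - fc A a x ∈ LinearMap.range (Matrix.mulVecLin (1 - A a)) :=
    ⟨x, sub_mulVecLin_apply A a x⟩
  have h2 : LinearMap.range (Matrix.mulVecLin (1 - A a)) ≤ Rspace A S := by
    unfold Rspace
    exact le_iSup₂ (f := fun j (_ : j ∈ S) => LinearMap.range (Matrix.mulVecLin (1 - A j))) a ha
  exact h2 h1

lemma R_invariant (S : Set (Fin k)) (a : Fin k) (ha : a ∈ S) (x : Fin n → ℝ)
    (hx : x ∈ Rspace A S) : fc A a x ∈ Rspace A S := by
  have : fc A a x = x - (x - fc A a x) := by abel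
  rw [this]
  exact Submodule.sub_mem _ hx (sub_mem_R A S a ha x)

lemma wp_R_invariant (S : Set (Fin k)) (l : List (Fin k)) (hl : ∀ a ∈ l, a ∈ S)
    (x : Fin n → ℝ) (hx : x ∈ Rspace A S) : wp A l x ∈ Rspace A S := by
  induction l with
  | nil => simpa using hx
  | cons a l ih =>
      rw [wp_cons, ContinuousLinearMap.mul_apply]
      exact R_invariant A S a (hl a (List.mem_cons_self)) _
        (ih (fun b hb => hl b (List.mem_cons_of_mem a hb)))

lemma wp_fix_N (S : Set (Fin k)) (l : List (Fin k)) (hl : ∀ a ∈ l, a ∈ S)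
    (x : Fin n → ℝ) (hx : x ∈ Nspace A S) : wp A l x = x := by
  induction l with
  | nil => simp
  | cons a l ih =>
      rw [wp_cons, ContinuousLinearMap.mul_apply,
        ih (fun b hb => hl b (List.mem_cons_of_mem a hb))]
      exact (mem_N_iff A S x).mp hx a (hl a (List.mem_cons_self))

lemma wp_sub_mem_R (S : Set (Fin k)) (l : List (Fin k)) (hl : ∀ a ∈ l, a ∈ S)
    (x : Fin n → ℝ) : wp A l x - x ∈ Rspace A S := by
  induction l with
  | nil => simp
  | cons a l ih =>
      rw [wp_cons, ContinuousLinearMap.mul_apply]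
      have h1 : fc A a (wp A l x) - wp A l x ∈ Rspace A S := by
        have := sub_mem_R A S a (hl a (List.mem_cons_self)) (wp A l x)
        have h2 : fc A a (wp A l x) - wp A l x = -(wp A l x - fc A a (wp A l x)) := by abel
        rw [h2]
        exact Submodule.neg_mem _ this
      have h2 := ih (fun b hb => hl b (List.mem_cons_of_mem a hb))
      have : fc A a (wp A l x) - x = (fc A a (wp A l x) - wp A l x) + (wp A l x - x) := by abel
      rw [this]
      exact Submodule.add_mem _ h1 h2

lemma tendsto_apply_clm {Φ : ℕ → (Fin n → ℝ) →L[ℝ] (Fin n → ℝ)}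
    {L : (Fin n → ℝ) →L[ℝ] (Fin n → ℝ)}
    (h : Tendsto Φ atTop (𝓝 L)) (x : Fin n → ℝ) :
    Tendsto (fun m => Φ m x) atTop (𝓝 (L x)) := by
  have hc := (ContinuousLinearMap.apply ℝ (Fin n → ℝ) x).continuous
  exact (hc.tendsto L).comp h

lemma pfx_letters (S : Set (Fin k)) (d : ℕ → Fin k) (hdS : ∀ m, d m ∈ S) (m : ℕ) :
    ∀ a ∈ (pfx d m).reverse, a ∈ S := by
  intro a ha
  rw [List.mem_reverse] at ha
  rcases List.mem_map.mp ha with ⟨i, _, rfl⟩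
  exact hdS i

set_option maxHeartbeats 1000000 in
/-- main limit lemma for recurrent sequences -/
lemma recurrent_limit (hLCP : IsLCP A) (h0 : IsZeroTransversal A) (S : Set (Fin k))
    (d : ℕ → Fin k) (hdS : ∀ m, d m ∈ S)
    (hrec : ∀ a ∈ S, ∀ N, ∃ m ≥ N, d m = a) :
    ∃ L : (Fin n → ℝ) →L[ℝ] (Fin n → ℝ),
      Tendsto (fun m => wp A ((pfx d m).reverse)) atTop (𝓝 L) ∧
      (∀ x, L x ∈ Nspace A S) ∧ (∀ x, L x - x ∈ Rspace A S) ∧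
      (∀ x ∈ Rspace A S, L x = 0) ∧ (∀ x ∈ Nspace A S, L x = x) := by
  obtain ⟨L, hL⟩ := lcp' A hLCP d
  have hfix : ∀ a ∈ S, ∀ x, fc A a (L x) = L x := by
    intro a ha x
    have hfreq : ∃ᶠ m in atTop, d m = a := by
      rw [Filter.frequently_atTop]
      exact fun N => hrec a ha N
    obtain ⟨φ, hφmono, hφ⟩ := Filter.extraction_of_frequently_atTop hfreq
    have h1 : Tendsto (fun i => wp A ((pfx d (φ i)).reverse)) atTop (𝓝 L) :=
      hL.comp hφmono.tendsto_atTop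
    have h2 : Tendsto (fun i => wp A ((pfx d (φ i + 1)).reverse)) atTop (𝓝 L) := by
      have : Tendsto (fun i => φ i + 1) atTop atTop :=
        (tendsto_add_atTop_nat 1).comp hφmono.tendsto_atTop
      exact hL.comp this
    have h3 : ∀ i, wp A ((pfx d (φ i + 1)).reverse) = fc A a * wp A ((pfx d (φ i)).reverse) := by
      intro i
      have hre : (pfx d (φ i + 1)).reverse = d (φ i) :: (pfx d (φ i)).reverse := by
        rw [pfx_succ, List.reverse_append]
        rfl
      rw [hre, wp_cons, hφ i]
    have h4 : Tendsto (fun i => fc A a * wp A ((pfx d (φ i)).reverse)) atTop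
        (𝓝 (fc A a * L)) := h1.const_mul (fc A a)
    have h4' : Tendsto (fun i => wp A ((pfx d (φ i + 1)).reverse)) atTop
        (𝓝 (fc A a * L)) := h4.congr (fun i => (h3 i).symm)
    have h5 : fc A a * L = L := tendsto_nhds_unique h4' h2
    calc fc A a (L x) = (fc A a * L) x := rfl
      _ = L x := by rw [h5]
  have hmemN : ∀ x, L x ∈ Nspace A S := by
    intro x
    rw [mem_N_iff]
    exact fun a ha => hfix a ha x
  have hmemR : ∀ x, L x - x ∈ Rspace A S := by
    intro x
    have hclosed : IsClosed (Rspace A S : Set (Fin n → ℝ)) :=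
      Submodule.closed_of_finiteDimensional _
    have hmem : ∀ m, wp A ((pfx d m).reverse) x - x ∈ Rspace A S := fun m =>
      wp_sub_mem_R A S _ (pfx_letters S d hdS m) x
    have htend : Tendsto (fun m => wp A ((pfx d m).reverse) x - x) atTop (𝓝 (L x - x)) :=
      (tendsto_apply_clm hL x).sub tendsto_const_nhds
    exact hclosed.mem_of_tendsto htend (Filter.Eventually.of_forall hmem)
  refine ⟨L, hL, hmemN, hmemR, ?_, ?_⟩
  · intro x hx
    have h1 : L x ∈ Nspace A S := hmemN x
    have h2 : L x ∈ Rspace A S := by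
      have : L x = x + (L x - x) := by abel
      rw [this]
      exact Submodule.add_mem _ hx (hmemR x)
    have h3 : L x ∈ Nspace A S ⊓ Rspace A S := ⟨h1, h2⟩
    rw [h0 S] at h3
    simpa using h3
  · intro x hx
    have : ∀ m, wp A ((pfx d m).reverse) x = x := fun m =>
      wp_fix_N A S _ (pfx_letters S d hdS m) x hx
    have htend : Tendsto (fun m => wp A ((pfx d m).reverse) x) atTop (𝓝 (L x)) :=
      tendsto_apply_clm hL x
    have := htend.congr' (Filter.Eventually.of_forall this)
    exact tendsto_nhds_unique this tendsto_const_nhds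

end RCPProof

namespace RCPProof

variable {n k : ℕ}

section Ulim

variable {X : Type*} [NormedAddCommGroup X] [NormedSpace ℝ X] [FiniteDimensional ℝ X]

lemma exists_ulim (U : Ultrafilter ℕ) (u : ℕ → X) (C : ℝ) (hC : ∀ m, ‖u m‖ ≤ C) :
    ∃ x : X, Tendsto u (↑U) (𝓝 x) := by
  have hcpt : IsCompact (Metric.closedBall (0:X) C) := isCompact_closedBall 0 C
  have hmem : Metric.closedBall (0:X) C ∈ Filter.map u ↑U := by
    apply Filter.mem_map.mpr
    apply Filter.univ_mem'
    intro m
    simpa [Metric.mem_closedBall, dist_eq_norm] using hC m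
  have : Ultrafilter.map u U ≤ Filter.principal (Metric.closedBall (0:X) C) :=
    Filter.le_principal_iff.mpr hmem
  obtain ⟨x, -, hx⟩ := hcpt.ultrafilter_le_nhds (Ultrafilter.map u U) this
  exact ⟨x, hx⟩

end Ulim

instance : FiniteDimensional ℝ ((Fin n → ℝ) →L[ℝ] (Fin n → ℝ)) :=
  Module.Finite.equiv (LinearMap.toContinuousLinearMap :
    ((Fin n → ℝ) →ₗ[ℝ] (Fin n → ℝ)) ≃ₗ[ℝ] ((Fin n → ℝ) →L[ℝ] (Fin n → ℝ)))

lemma ulim_norm_le {X : Type*} [NormedAddCommGroup X]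
    (U : Ultrafilter ℕ) (u : ℕ → X) {x : X} (hu : Tendsto u (↑U) (𝓝 x))
    {C : ℝ} (hC : ∀ᶠ m in ↑U, ‖u m‖ ≤ C) : ‖x‖ ≤ C := by
  exact le_of_tendsto hu.norm hC

lemma ulim_norm_ge {X : Type*} [NormedAddCommGroup X]
    (U : Ultrafilter ℕ) (u : ℕ → X) {x : X} (hu : Tendsto u (↑U) (𝓝 x))
    {C : ℝ} (hC : ∀ᶠ m in ↑U, C ≤ ‖u m‖) : C ≤ ‖x‖ := by
  exact ge_of_tendsto hu.norm hC

lemma ulim_unique {X : Type*} [NormedAddCommGroup X]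
    (U : Ultrafilter ℕ) {u v : ℕ → X} {x y : X}
    (hu : Tendsto u (↑U) (𝓝 x)) (hv : Tendsto v (↑U) (𝓝 y))
    (he : ∀ᶠ m in ↑U, u m = v m) : x = y := by
  have := hu.congr' he
  exact tendsto_nhds_unique this hv

lemma ulim_mem_closure {X : Type*} [NormedAddCommGroup X]
    (U : Ultrafilter ℕ) {u : ℕ → X} {x : X} (hu : Tendsto u (↑U) (𝓝 x))
    {s : Set X} (hs : ∀ᶠ m in ↑U, u m ∈ s) : x ∈ closure s :=
  mem_closure_of_tendsto hu hs

end RCPProof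

namespace RCPProof

variable {n k : ℕ} (A : Fin k → Matrix (Fin n) (Fin n) ℝ)

/-- a "complete word" over S : uses only letters of S and contains all of them -/
def CompW (S : Set (Fin k)) (l : List (Fin k)) : Prop :=
  (∀ a ∈ l, a ∈ S) ∧ ∀ a ∈ S, a ∈ l

lemma tendsto_apply₂ {F : Filter ℕ} {Φ : ℕ → (Fin n → ℝ) →L[ℝ] (Fin n → ℝ)}
    {ψ : ℕ → Fin n → ℝ} {L : (Fin n → ℝ) →L[ℝ] (Fin n → ℝ)} {x : Fin n → ℝ}
    (hΦ : Tendsto Φ F (𝓝 L)) (hψ : Tendsto ψ F (𝓝 x)) :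
    Tendsto (fun m => Φ m (ψ m)) F (𝓝 (L x)) := by
  have hc : Continuous (fun p : ((Fin n → ℝ) →L[ℝ] (Fin n → ℝ)) × (Fin n → ℝ) => p.1 p.2) :=
    isBoundedBilinearMap_apply.continuous
  exact (hc.tendsto (L, x)).comp (hΦ.prodMk_nhds hψ)

set_option maxHeartbeats 2000000 in
lemma lemma3 (hLCP : IsLCP A) (h0 : IsZeroTransversal A) (S : Set (Fin k))
    (hS : S.Nonempty) (B : ℝ) (hB1 : 1 ≤ B) (hB : ∀ l : List (Fin k), ‖wp A l‖ ≤ B) :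
    ∃ M : ℕ, ∀ bs : List (List (Fin k)), bs.length = M → (∀ b ∈ bs, CompW S b) →
      ∀ x ∈ Rspace A S, ‖wp A bs.flatten x‖ ≤ (1/2) * ‖x‖ := by
  classical
  have hBpos : (0:ℝ) < B := by linarith
  by_contra hcon
  push_neg at hcon
  choose bs hlen hcomp x hxR hxbig using hcon
  have hx0 : ∀ M, x M ≠ 0 := by
    intro M h
    have h2 := hxbig M
    rw [h] at h2
    simp at h2
  set xh : ℕ → (Fin n → ℝ) := fun M => ‖x M‖⁻¹ • x M with hxh
  have hxh1 : ∀ M, ‖xh M‖ = 1 := fun M => norm_smul_inv_norm (hx0 M)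
  have hxhR : ∀ M, xh M ∈ Rspace A S := fun M => Submodule.smul_mem _ _ (hxR M)
  have hxhbig : ∀ M, 1/2 < ‖wp A (bs M).flatten (xh M)‖ := by
    intro M
    have hpos : (0:ℝ) < ‖x M‖ := norm_pos_iff.mpr (hx0 M)
    have : wp A (bs M).flatten (xh M) = ‖x M‖⁻¹ • wp A (bs M).flatten (x M) := by
      rw [hxh]; exact (wp A (bs M).flatten).map_smul _ _
    rw [this, norm_smul, Real.norm_eq_abs,
      abs_of_pos (by positivity : (0:ℝ) < ‖x M‖⁻¹)]
    have heq : (1:ℝ)/2 = ‖x M‖⁻¹ * ((1/2) * ‖x M‖) := by field_simp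
    rw [heq]
    exact mul_lt_mul_of_pos_left (hxbig M) (by positivity)
  set cs : ℕ → List (List (Fin k)) := fun M => (bs M).reverse with hcs
  have hcslen : ∀ M, (cs M).length = M := by
    intro M; rw [hcs]; simp [hlen M]
  -- word-level objects
  set Γw : ℕ → ℕ → ℕ → List (Fin k) :=
    fun M i t => (((cs M).drop t).take (i - t)).reverse.flatten with hΓw
  set ΓM : ℕ → ℕ → ℕ → ((Fin n → ℝ) →L[ℝ] (Fin n → ℝ)) :=
    fun M i t => wp A (Γw M i t) with hΓM
  set HM : ℕ → ℕ → ((Fin n → ℝ) →L[ℝ] (Fin n → ℝ)) :=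
    fun M i => wp A ((cs M).getD i []) with hHM
  set uM : ℕ → ℕ → (Fin n → ℝ) := fun M i => ΓM M i 0 (xh M) with huM
  have wΓii : ∀ M i, ΓM M i i = 1 := by
    intro M i
    simp [hΓM, hΓw, Nat.sub_self]
  have wΓstep : ∀ M i t, t ≤ i → i < M → ΓM M (i+1) t = HM M i * ΓM M i t := by
    intro M i t ht hi
    have hilen : i < (cs M).length := by rw [hcslen]; exact hi
    have hdlen : i - t < ((cs M).drop t).length := by
      rw [List.length_drop]; omega
    have htake : ((cs M).drop t).take (i + 1 - t) =
        ((cs M).drop t).take (i - t) ++ [((cs M).drop t)[i - t]] := by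
      have : i + 1 - t = (i - t) + 1 := by omega
      rw [this, List.take_succ, List.getElem?_eq_getElem hdlen]
      rfl
    have hgetd : ((cs M).drop t)[i - t]'hdlen = (cs M)[i]'hilen := by
      rw [List.getElem_drop]
      congr 1
      omega
    have hgetD : (cs M).getD i [] = (cs M)[i]'hilen := List.getD_eq_getElem _ _ hilen
    rw [hΓM, hΓw]
    simp only
    rw [htake, List.reverse_append, hgetd]
    simp only [List.reverse_singleton, List.singleton_append, List.flatten_cons]
    rw [wp_append, hHM]
    simp only
    rw [hgetD]
  have wΓnorm : ∀ M i t, ‖ΓM M i t‖ ≤ B := fun M i t => hB _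
  have wHnorm : ∀ M i, ‖HM M i‖ ≤ B := fun M i => hB _
  have wunorm : ∀ M i, ‖uM M i‖ ≤ B := by
    intro M i
    calc ‖ΓM M i 0 (xh M)‖ ≤ ‖ΓM M i 0‖ * ‖xh M‖ := ContinuousLinearMap.le_opNorm _ _
      _ ≤ B * 1 := mul_le_mul (wΓnorm M i 0) (le_of_eq (hxh1 M)) (norm_nonneg _) (by linarith)
      _ = B := mul_one B
  have wustep : ∀ M i, i < M → uM M (i+1) = HM M i (uM M i) := by
    intro M i hi
    rw [huM]
    simp only
    rw [wΓstep M i 0 (Nat.zero_le i) hi, ContinuousLinearMap.mul_apply]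
  have wulow : ∀ M i, 1/(2*B) ≤ ‖uM M i‖ := by
    intro M i
    have hsplit : (bs M).flatten = ((cs M).drop i).reverse.flatten ++ Γw M i 0 := by
      rw [hΓw]
      simp only [List.drop_zero, Nat.sub_zero]
      rw [← List.flatten_append, ← List.reverse_append, List.take_append_drop]
      rw [hcs]
      simp only [List.reverse_reverse]
    have : wp A (bs M).flatten (xh M) =
        wp A (((cs M).drop i).reverse.flatten) (uM M i) := by
      rw [hsplit, wp_append, ContinuousLinearMap.mul_apply]
    have hb := hxhbig M
    rw [this] at hb
    have : ‖wp A (((cs M).drop i).reverse.flatten) (uM M i)‖ ≤ B * ‖uM M i‖ :=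
      le_trans (ContinuousLinearMap.le_opNorm _ _)
        (mul_le_mul_of_nonneg_right (hB _) (norm_nonneg _))
    rw [div_le_iff₀ (by positivity)]
    nlinarith
  have wumem : ∀ M, uM M 0 ∈ Rspace A S := by
    intro M
    rw [huM]
    simp only
    rw [wΓii]
    simpa using hxhR M
  -- ultrafilter limits
  obtain ⟨U, hU⟩ := Ultrafilter.exists_le (atTop : Filter ℕ)
  have hUev : ∀ N : ℕ, ∀ᶠ M in ↑U, N ≤ M := fun N => hU (Filter.eventually_ge_atTop N)
  have hHlim : ∀ i, ∃ H, Tendsto (fun M => HM M i) (↑U) (𝓝 H) :=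
    fun i => exists_ulim U _ B (fun M => wHnorm M i)
  choose Hf hHf using hHlim
  have hΓlim : ∀ i t, ∃ G, Tendsto (fun M => ΓM M i t) (↑U) (𝓝 G) :=
    fun i t => exists_ulim U _ B (fun M => wΓnorm M i t)
  choose Γf hΓf using hΓlim
  have hulim : ∀ i, ∃ u, Tendsto (fun M => uM M i) (↑U) (𝓝 u) :=
    fun i => exists_ulim U _ B (fun M => wunorm M i)
  choose uf huf using hulim
  have lΓii : ∀ i, Γf i i = 1 :=
    fun i => ulim_unique U (hΓf i i) tendsto_const_nhds
      (Filter.Eventually.of_forall (fun M => wΓii M i))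
  have lΓstep : ∀ i t, t ≤ i → Γf (i+1) t = Hf i * Γf i t := by
    intro i t ht
    refine ulim_unique U (hΓf (i+1) t) ((hHf i).mul (hΓf i t)) ?_
    filter_upwards [hUev (i+1)] with M hM
    exact wΓstep M i t ht (by omega)
  have lΓnorm : ∀ i t, ‖Γf i t‖ ≤ B := fun i t =>
    ulim_norm_le U _ (hΓf i t) (Filter.Eventually.of_forall (fun M => wΓnorm M i t))
  have lustep : ∀ i, uf (i+1) = Hf i (uf i) := by
    intro i
    refine ulim_unique U (huf (i+1)) (tendsto_apply₂ (hHf i) (huf i)) ?_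
    filter_upwards [hUev (i+1)] with M hM
    exact wustep M i (by omega)
  have lulow : ∀ i, 1/(2*B) ≤ ‖uf i‖ := fun i =>
    ulim_norm_ge U _ (huf i) (Filter.Eventually.of_forall (fun M => wulow M i))
  have lunorm : ∀ i, ‖uf i‖ ≤ B := fun i =>
    ulim_norm_le U _ (huf i) (Filter.Eventually.of_forall (fun M => wunorm M i))
  have lumem : uf 0 ∈ Rspace A S := by
    have hclosed : IsClosed (Rspace A S : Set (Fin n → ℝ)) :=
      Submodule.closed_of_finiteDimensional _
    exact hclosed.mem_of_tendsto (huf 0) (Filter.Eventually.of_forall wumem)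
  have lHmem : ∀ i, Hf i ∈ closure {T : (Fin n → ℝ) →L[ℝ] (Fin n → ℝ) |
      ∃ b : List (Fin k), CompW S b ∧ T = wp A b} := by
    intro i
    refine ulim_mem_closure U (hHf i) ?_
    filter_upwards [hUev (i+1)] with M hM
    have hilen : i < (cs M).length := by rw [hcslen]; omega
    refine ⟨(cs M).getD i [], ?_, rfl⟩
    have hmem : (cs M).getD i [] ∈ cs M := by
      rw [List.getD_eq_getElem _ _ hilen]
      exact List.getElem_mem _
    exact hcomp M _ (List.mem_reverse.mp hmem)
  -- approximating complete blocks
  set δ : ℝ := 1/(16*B^3) with hδ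
  have hδpos : 0 < δ := by rw [hδ]; positivity
  have happrox : ∀ t : ℕ, ∃ b : List (Fin k), CompW S b ∧
      ‖Hf t - wp A b‖ ≤ δ * (1/2)^t := by
    intro t
    have hεpos : (0:ℝ) < δ * (1/2)^t := by positivity
    obtain ⟨T, hTmem, hTdist⟩ := Metric.mem_closure_iff.mp (lHmem t) _ hεpos
    obtain ⟨b, hbcomp, rfl⟩ := hTmem
    exact ⟨b, hbcomp, by rw [← dist_eq_norm]; exact le_of_lt hTdist⟩
  choose cb hcbcomp hcbdist using happrox
  set cum : ℕ → List (Fin k) := fun i => Nat.rec [] (fun t c => cb t ++ c) i with hcum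
  have hcum0 : cum 0 = [] := rfl
  have hcumS : ∀ i, cum (i+1) = cb i ++ cum i := fun i => rfl
  -- key identity
  have hident : ∀ i, uf i = wp A (cum i) (uf 0) +
      ∑ t ∈ Finset.range i, Γf i (t+1) ((Hf t - wp A (cb t)) (wp A (cum t) (uf 0))) := by
    intro i
    induction i with
    | zero => simp [hcum0]
    | succ i ih =>
        rw [lustep i, ih, map_add, map_sum, Finset.sum_range_succ]
        have h1 : ∀ t ∈ Finset.range i,
            Hf i (Γf i (t+1) ((Hf t - wp A (cb t)) (wp A (cum t) (uf 0)))) =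
            Γf (i+1) (t+1) ((Hf t - wp A (cb t)) (wp A (cum t) (uf 0))) := by
          intro t ht
          rw [lΓstep i (t+1) (Nat.succ_le_of_lt (Finset.mem_range.mp ht))]
          rfl
        rw [Finset.sum_congr rfl h1]
        have h2 : Hf i (wp A (cum i) (uf 0)) =
            wp A (cum (i+1)) (uf 0) + (Hf i - wp A (cb i)) (wp A (cum i) (uf 0)) := by
          rw [hcumS, wp_append, ContinuousLinearMap.mul_apply,
            ContinuousLinearMap.sub_apply]
          abel
        rw [h2]
        have h3 : Γf (i+1) (i+1) ((Hf i - wp A (cb i)) (wp A (cum i) (uf 0))) =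
            (Hf i - wp A (cb i)) (wp A (cum i) (uf 0)) := by
          rw [lΓii]
          rfl
        rw [h3]
        abel
  have lu0 : ‖uf 0‖ ≤ 1 := by
    refine ulim_norm_le U _ (huf 0) (Filter.Eventually.of_forall (fun M => ?_))
    apply le_of_eq
    rw [huM]
    simp only
    rw [wΓii M 0]
    simpa using hxh1 M
  have hψnorm : ∀ t, ‖wp A (cum t) (uf 0)‖ ≤ B := by
    intro t
    calc ‖wp A (cum t) (uf 0)‖ ≤ ‖wp A (cum t)‖ * ‖uf 0‖ := ContinuousLinearMap.le_opNorm _ _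
      _ ≤ B * 1 := mul_le_mul (hB _) lu0 (norm_nonneg _) (by linarith)
      _ = B := mul_one B
  have hsum : ∀ i, ‖uf i - wp A (cum i) (uf 0)‖ ≤ 1/(8*B) := by
    intro i
    have heq : uf i - wp A (cum i) (uf 0) =
        ∑ t ∈ Finset.range i, Γf i (t+1) ((Hf t - wp A (cb t)) (wp A (cum t) (uf 0))) := by
      rw [hident i]
      abel
    rw [heq]
    have hterm : ∀ t ∈ Finset.range i,
        ‖Γf i (t+1) ((Hf t - wp A (cb t)) (wp A (cum t) (uf 0)))‖ ≤
          B * B * δ * (1/2)^t := by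
      intro t _
      calc ‖Γf i (t+1) ((Hf t - wp A (cb t)) (wp A (cum t) (uf 0)))‖
          ≤ ‖Γf i (t+1)‖ * ‖(Hf t - wp A (cb t)) (wp A (cum t) (uf 0))‖ :=
            ContinuousLinearMap.le_opNorm _ _
        _ ≤ B * (‖Hf t - wp A (cb t)‖ * ‖wp A (cum t) (uf 0)‖) := by
            apply mul_le_mul (lΓnorm i (t+1)) (ContinuousLinearMap.le_opNorm _ _)
              (norm_nonneg _) (by linarith)
        _ ≤ B * ((δ * (1/2)^t) * B) := by
            apply mul_le_mul_of_nonneg_left _ (by linarith)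
            exact mul_le_mul (hcbdist t) (hψnorm t) (norm_nonneg _) (by positivity)
        _ = B * B * δ * (1/2)^t := by ring
    calc ‖∑ t ∈ Finset.range i, Γf i (t+1) ((Hf t - wp A (cb t)) (wp A (cum t) (uf 0)))‖
        ≤ ∑ t ∈ Finset.range i, ‖Γf i (t+1) ((Hf t - wp A (cb t)) (wp A (cum t) (uf 0)))‖ :=
          norm_sum_le _ _
      _ ≤ ∑ t ∈ Finset.range i, B * B * δ * (1/2)^t := Finset.sum_le_sum hterm
      _ = B * B * δ * ∑ t ∈ Finset.range i, (1/2)^t := by rw [← Finset.mul_sum]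
      _ ≤ B * B * δ * 2 := by
          apply mul_le_mul_of_nonneg_left _ (by positivity)
          exact sum_geometric_two_le i
      _ = 1/(8*B) := by rw [hδ]; field_simp; ring
  -- the infinite concatenation of the approximating blocks
  obtain ⟨a0, ha0⟩ := hS
  set g : ℕ → List (Fin k) := fun t => (cb t).reverse with hg
  have hgne : ∀ t, g t ≠ [] := by
    intro t
    rw [hg]
    simp only [ne_eq, List.reverse_eq_nil_iff]
    exact List.ne_nil_of_mem ((hcbcomp t).2 a0 ha0)
  set d := seqOf a0 g with hd
  have hdS : ∀ m, d m ∈ S := by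
    intro m
    apply seqOf_mem_prop a0 g hgne (· ∈ S)
    intro t a hamem
    exact (hcbcomp t).1 a (List.mem_reverse.mp hamem)
  have hdrec : ∀ a ∈ S, ∀ N, ∃ m ≥ N, d m = a := by
    intro a ha N
    exact seqOf_frequently a0 g hgne a (fun t => List.mem_reverse.mpr ((hcbcomp t).2 a ha)) N
  obtain ⟨L, hLt, hLN, hLR, hLkill, hLfix⟩ := recurrent_limit A hLCP h0 S d hdS hdrec
  have hbigrev : ∀ i, (bigL g i).reverse = cum i := by
    intro i
    induction i with
    | zero => simp [hcum0]
    | succ i ih =>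
        rw [bigL_succ, List.reverse_append, ih, hcumS]
        rw [hg]
        simp [List.reverse_reverse]
  have hmile : ∀ i, wp A (cum i) (uf 0) = wp A ((pfx d ((bigL g i).length)).reverse) (uf 0) := by
    intro i
    rw [hd, pfx_seqOf a0 g hgne i, hbigrev i]
  have htend0 : Tendsto (fun i => wp A (cum i) (uf 0)) atTop (𝓝 0) := by
    have h1 : Tendsto (fun m => wp A ((pfx d m).reverse) (uf 0)) atTop (𝓝 (L (uf 0))) :=
      tendsto_apply_clm hLt (uf 0)
    rw [hLkill (uf 0) lumem] at h1
    have h2 : Tendsto (fun i => (bigL g i).length) atTop atTop :=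
      tendsto_atTop_mono (fun i => bigL_len_ge g hgne i) tendsto_id
    refine Tendsto.congr (fun i => (hmile i).symm) (h1.comp h2)
  have hev : ∀ᶠ i in atTop, ‖wp A (cum i) (uf 0)‖ < 1/(4*B) := by
    have h1 := htend0.norm
    simp only [norm_zero] at h1
    exact h1.eventually_lt_const (by positivity)
  obtain ⟨i, hi⟩ := hev.exists
  have h1 := lulow i
  have h2 := hsum i
  have h3 : ‖uf i‖ ≤ ‖wp A (cum i) (uf 0)‖ + ‖uf i - wp A (cum i) (uf 0)‖ := by
    have := norm_add_le (wp A (cum i) (uf 0)) (uf i - wp A (cum i) (uf 0))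
    simpa using this
  have hfrac : 1/(4*B) + 1/(8*B) < 1/(2*B) := by
    rw [div_add_div _ _ (by positivity) (by positivity), div_lt_div_iff₀ (by positivity) (by positivity)]
    ring_nf
    nlinarith
  linarith

end RCPProof

namespace RCPProof

variable {n k : ℕ}

set_option maxHeartbeats 2000000 in
theorem main_clm (A : Fin k → Matrix (Fin n) (Fin n) ℝ)
    (hLCP : IsLCP A) (h0 : IsZeroTransversal A) (j : ℕ → Fin k) (hk : 0 < k) :
    ∃ R', Tendsto (fun m => wp A (pfx j m)) atTop (𝓝 R') := by
  classical
  -- the set of letters occurring infinitely often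
  set S : Set (Fin k) := {a | ∀ N, ∃ m ≥ N, j m = a} with hSdef
  -- past some point all letters are in S
  have hNa : ∀ a : Fin k, ∃ N, a ∉ S → ∀ m ≥ N, j m ≠ a := by
    intro a
    by_cases ha : a ∈ S
    · exact ⟨0, fun h => absurd ha h⟩
    · have ha' : ¬ ∀ N, ∃ m ≥ N, j m = a := ha
      push_neg at ha'
      obtain ⟨N, hN⟩ := ha'
      exact ⟨N, fun _ m hm => hN m hm⟩
  choose Na hNa using hNa
  set m₀ : ℕ := Finset.univ.sup Na with hm₀def
  have hm₀ : ∀ m, m₀ ≤ m → j m ∈ S := by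
    intro m hm
    by_contra hnot
    exact hNa (j m) hnot m
      (le_trans (Finset.le_sup (Finset.mem_univ (j m))) hm) rfl
  have hS : S.Nonempty := ⟨j m₀, hm₀ m₀ le_rfl⟩
  -- shifted sequence
  set jsh : ℕ → Fin k := fun m => j (m₀ + m) with hjsh
  have hjshS : ∀ m, jsh m ∈ S := fun m => hm₀ _ (Nat.le_add_right _ _)
  have hjshrec : ∀ a ∈ S, ∀ N, ∃ m ≥ N, jsh m = a := by
    intro a ha N
    obtain ⟨m, hm1, hm2⟩ := ha (m₀ + N)
    refine ⟨m - m₀, by omega, ?_⟩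
    rw [hjsh]
    simp only
    rw [show m₀ + (m - m₀) = m by omega]
    exact hm2
  -- uniform bound and halving constant
  obtain ⟨B, hB1, hB⟩ := exists_B A hLCP
  obtain ⟨M₀, hM₀⟩ := lemma3 A hLCP h0 S hS B hB1 hB
  -- the limit projection, from the shifted sequence itself
  obtain ⟨L, hLt, hLN, hLR, hLkill, hLfix⟩ := recurrent_limit A hLCP h0 S jsh hjshS hjshrec
  -- cut points (in jsh time)
  have hcut : ∀ N : ℕ, ∃ c', N < c' ∧ ∀ a ∈ S, ∃ m, N ≤ m ∧ m < c' ∧ jsh m = a := by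
    intro N
    have : ∀ a : Fin k, ∃ m, N ≤ m ∧ (a ∈ S → jsh m = a) := by
      intro a
      by_cases ha : a ∈ S
      · obtain ⟨m, hm1, hm2⟩ := hjshrec a ha N
        exact ⟨m, hm1, fun _ => hm2⟩
      · exact ⟨N, le_rfl, fun h => absurd h ha⟩
    choose mf hmf1 hmf2 using this
    refine ⟨(Finset.univ.sup mf) + 1, ?_, ?_⟩
    · have : N ≤ Finset.univ.sup mf := by
        obtain ⟨a⟩ : Nonempty (Fin k) := ⟨⟨0, hk⟩⟩
        exact le_trans (hmf1 a) (Finset.le_sup (Finset.mem_univ a))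
      omega
    · intro a ha
      refine ⟨mf a, hmf1 a, ?_, hmf2 a ha⟩
      have := Finset.le_sup (f := mf) (Finset.mem_univ a)
      omega
  choose cf hcf1 hcf2 using hcut
  set c : ℕ → ℕ := fun i => Nat.rec 0 (fun _ prev => cf prev) i with hc
  have hc0 : c 0 = 0 := rfl
  have hcS : ∀ i, c (i+1) = cf (c i) := fun i => rfl
  have hcmono : ∀ i, c i < c (i+1) := fun i => by rw [hcS]; exact hcf1 (c i)
  have hcle : ∀ {i i'}, i ≤ i' → c i ≤ c i' := by
    intro i i' h
    induction i' with
    | zero => simp [Nat.le_zero.mp h]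
    | succ m ih =>
        rcases Nat.lt_or_ge i (m+1) with h1 | h1
        · exact le_trans (ih (by omega)) (le_of_lt (hcmono m))
        · have : i = m + 1 := by omega
          rw [this]
  -- segments of the shifted word
  set seg : ℕ → ℕ → List (Fin k) :=
    fun a b => (List.range (b - a)).map (fun t => jsh (a + t)) with hsegdef
  have hseg_letters : ∀ a b, ∀ x ∈ seg a b, x ∈ S := by
    intro a b x hx
    rw [hsegdef] at hx
    rcases List.mem_map.mp hx with ⟨t, _, rfl⟩
    exact hjshS _
  have hseg_append : ∀ {a b cc : ℕ}, a ≤ b → b ≤ cc → seg a b ++ seg b cc = seg a cc := by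
    intro a b cc hab hbc
    rw [hsegdef]
    simp only
    have h1 : cc - a = (b - a) + (cc - b) := by omega
    rw [h1, List.range_add, List.map_append, List.map_map]
    congr 1
    apply List.map_congr_left
    intro t ht
    simp only [Function.comp_apply]
    congr 1
    omega
  have hpfx_seg : ∀ m, pfx jsh m = seg 0 m := by
    intro m
    rw [hsegdef, pfx]
    simp
  -- blocks
  set blk : ℕ → List (Fin k) := fun i => seg (c i) (c (i+1)) with hblk
  have hblk_comp : ∀ i, CompW S (blk i) := by
    intro i
    constructor
    · exact hseg_letters _ _
    · intro a ha
      obtain ⟨m, hm1, hm2, hm3⟩ := hcf2 (c i) a ha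
      rw [hblk, hsegdef]
      simp only
      rw [← hcS] at hm2
      refine List.mem_map.mpr ⟨m - c i, ?_, ?_⟩
      · rw [List.mem_range]; omega
      · rw [show c i + (m - c i) = m by omega]; exact hm3
  have hchunk : ∀ p q, seg (c p) (c (p+q)) =
      ((List.range q).map (fun r => blk (p+r))).flatten := by
    intro p q
    induction q with
    | zero => simp [hsegdef]
    | succ q ih =>
        rw [List.range_succ, List.map_append, List.flatten_append, ← ih]
        simp only [List.map_cons, List.map_nil, List.flatten_cons, List.flatten_nil,
          List.append_nil]
        rw [hblk]
        simp only
        rw [show p + (q + 1) = (p + q) + 1 by omega]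
        exact (hseg_append (hcle (by omega)) (le_of_lt (hcmono (p+q)))).symm
  -- geometric decay on Rspace
  have hdecay : ∀ Q, ∀ y ∈ Rspace A S, ‖wp A (seg 0 (c (Q * M₀))) y‖ ≤ (1/2)^Q * ‖y‖ := by
    intro Q
    induction Q with
    | zero => intro y hy; simp [hsegdef, hc0]
    | succ Q ih =>
        intro y hy
        have hsplit : seg 0 (c ((Q+1) * M₀)) =
            seg 0 (c (Q * M₀)) ++ seg (c (Q * M₀)) (c ((Q+1) * M₀)) := by
          refine (hseg_append (Nat.zero_le _) (hcle ?_)).symm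
          exact Nat.mul_le_mul_right M₀ (by omega)
        have hchw : seg (c (Q * M₀)) (c ((Q+1) * M₀)) =
            ((List.range M₀).map (fun r => blk (Q * M₀ + r))).flatten := by
          rw [show (Q+1) * M₀ = Q * M₀ + M₀ by ring]
          exact hchunk (Q * M₀) M₀
        have hy' : wp A (seg (c (Q * M₀)) (c ((Q+1) * M₀))) y ∈ Rspace A S :=
          wp_R_invariant A S _ (hseg_letters _ _) y hy
        have hhalf : ‖wp A (seg (c (Q * M₀)) (c ((Q+1) * M₀))) y‖ ≤ (1/2) * ‖y‖ := by
          rw [hchw]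
          exact hM₀ _ (by simp) (by
            intro b hb
            rcases List.mem_map.mp hb with ⟨r, _, rfl⟩
            exact hblk_comp _) y hy
        rw [hsplit, wp_append, ContinuousLinearMap.mul_apply]
        calc ‖wp A (seg 0 (c (Q * M₀))) (wp A (seg (c (Q * M₀)) (c ((Q+1) * M₀))) y)‖
            ≤ (1/2)^Q * ‖wp A (seg (c (Q * M₀)) (c ((Q+1) * M₀))) y‖ := ih _ hy'
          _ ≤ (1/2)^Q * ((1/2) * ‖y‖) := by
              apply mul_le_mul_of_nonneg_left hhalf (by positivity)
          _ = (1/2)^(Q+1) * ‖y‖ := by ring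
  -- convergence of the shifted right products to L
  have hVtend : Tendsto (fun m => wp A (pfx jsh m)) atTop (𝓝 L) := by
    rw [Metric.tendsto_atTop]
    intro ε hε
    have hC : (0:ℝ) < B * (1 + ‖L‖) + 1 := by positivity
    obtain ⟨Q, hQ⟩ := exists_pow_lt_of_lt_one
      (show (0:ℝ) < ε / (B * (1 + ‖L‖) + 1) by positivity)
      (show (1:ℝ)/2 < 1 by norm_num)
    refine ⟨c (Q * M₀), ?_⟩
    intro m hm
    rw [dist_eq_norm]
    have hbound : ‖wp A (pfx jsh m) - L‖ ≤ (1/2)^Q * (B * (1 + ‖L‖)) := by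
      apply ContinuousLinearMap.opNorm_le_bound _ (by positivity)
      intro x
      have hfix : wp A (pfx jsh m) (L x) = L x :=
        wp_fix_N A S _ (fun a ha => by
          rcases List.mem_map.mp ha with ⟨i, _, rfl⟩
          exact hjshS i) _ (hLN x)
      have hid : (wp A (pfx jsh m) - L) x = wp A (pfx jsh m) (x - L x) := by
        rw [ContinuousLinearMap.sub_apply, map_sub, hfix]
      rw [hid]
      have hyR : x - L x ∈ Rspace A S := by
        have := hLR x
        have h2 : x - L x = -(L x - x) := by abel
        rw [h2]
        exact Submodule.neg_mem _ this
      -- split at the cut point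
      have hsplit : pfx jsh m = seg 0 (c (Q * M₀)) ++ seg (c (Q * M₀)) m := by
        rw [hpfx_seg]
        exact (hseg_append (Nat.zero_le _) hm).symm
      rw [hsplit, wp_append, ContinuousLinearMap.mul_apply]
      have hy'R : wp A (seg (c (Q * M₀)) m) (x - L x) ∈ Rspace A S :=
        wp_R_invariant A S _ (hseg_letters _ _) _ hyR
      calc ‖wp A (seg 0 (c (Q * M₀))) (wp A (seg (c (Q * M₀)) m) (x - L x))‖
          ≤ (1/2)^Q * ‖wp A (seg (c (Q * M₀)) m) (x - L x)‖ := hdecay Q _ hy'R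
        _ ≤ (1/2)^Q * (B * ‖x - L x‖) := by
            apply mul_le_mul_of_nonneg_left _ (by positivity)
            exact le_trans (ContinuousLinearMap.le_opNorm _ _)
              (mul_le_mul_of_nonneg_right (hB _) (norm_nonneg _))
        _ ≤ (1/2)^Q * (B * ((1 + ‖L‖) * ‖x‖)) := by
            apply mul_le_mul_of_nonneg_left _ (by positivity)
            apply mul_le_mul_of_nonneg_left _ (by linarith)
            calc ‖x - L x‖ ≤ ‖x‖ + ‖L x‖ := norm_sub_le _ _
              _ ≤ ‖x‖ + ‖L‖ * ‖x‖ := by linarith [ContinuousLinearMap.le_opNorm L x]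
              _ = (1 + ‖L‖) * ‖x‖ := by ring
        _ = (1/2)^Q * (B * (1 + ‖L‖)) * ‖x‖ := by ring
    calc ‖wp A (pfx jsh m) - L‖ ≤ (1/2)^Q * (B * (1 + ‖L‖)) := hbound
      _ < ε := by
          have h2 : (1/2:ℝ)^Q * (B * (1 + ‖L‖) + 1) < ε := by
            rw [← lt_div_iff₀ hC]
            exact hQ
          nlinarith [pow_pos (show (0:ℝ) < 1/2 by norm_num) Q]
  -- assemble with the prefix
  refine ⟨wp A (pfx j m₀) * L, ?_⟩
  have hsplit : ∀ m, m₀ ≤ m → pfx j m = pfx j m₀ ++ pfx jsh (m - m₀) := by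
    intro m hm
    obtain ⟨p, rfl⟩ : ∃ p, m = m₀ + p := ⟨m - m₀, by omega⟩
    rw [pfx, pfx, pfx, List.range_add, List.map_append, List.map_map]
    simp only [Nat.add_sub_cancel_left]
    rfl
  have h1 : Tendsto (fun m => wp A (pfx j m₀) * wp A (pfx jsh (m - m₀))) atTop
      (𝓝 (wp A (pfx j m₀) * L)) := by
    have h2 : Tendsto (fun m => wp A (pfx jsh (m - m₀))) atTop (𝓝 L) :=
      hVtend.comp (tendsto_sub_atTop_nat m₀)
    exact h2.const_mul _
  refine Tendsto.congr' ?_ h1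
  filter_upwards [Filter.eventually_ge_atTop m₀] with m hm
  rw [hsplit m hm, wp_append]

end RCPProof

/-- If Σ is LCP and 0-transversal then Σ is RCP. -/
theorem lcp_zero_transversal_imp_rcp {n k : ℕ} (A : Fin k → Matrix (Fin n) (Fin n) ℝ)
    (hLCP : IsLCP A) (h0 : IsZeroTransversal A) : IsRCP A := by
  intro j
  rcases Nat.eq_zero_or_pos k with hk | hk
  · subst hk
    exact (j 0).elim0
  obtain ⟨R', hR'⟩ := RCPProof.main_clm A hLCP h0 j hk
  refine ⟨RCPProof.matCLM.symm R', ?_⟩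
  have hcont : Continuous (RCPProof.matCLM (n := n)).symm :=
    LinearMap.continuous_of_finiteDimensional
      (RCPProof.matCLM (n := n)).symm.toLinearMap
  have h2 := (hcont.tendsto R').comp hR'
  refine Tendsto.congr ?_ h2
  intro m
  show RCPProof.matCLM.symm (RCPProof.wp A (RCPProof.pfx j m)) = rightProd A j m
  rw [← RCPProof.rightProd_eq]
  exact RCPProof.matCLM.symm_apply_apply _
end

section
/- Let Σ = {P_j : j ∈ J} be a finite set of real n×n matrices such that each P_j is the orthogonal projection of ℝⁿ onto a linear subspace L_j ⊆ ℝⁿ. Then Σ is LCP, RCP, and transversal. -/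
open Filter Topology Matrix

attribute [local instance] Matrix.normedAddCommGroup

set_option synthInstance.maxHeartbeats 1000000
set_option maxHeartbeats 1000000

/-! ### Auxiliary facts about orthogonal projections -/

noncomputable section AuxProj

variable {E : Type*} [NormedAddCommGroup E] [InnerProductSpace ℝ E] [FiniteDimensional ℝ E]

/-- The orthogonal projection, coerced to an endomap of `E`. -/
noncomputable def pj (K : Submodule ℝ E) (v : E) : E := (Submodule.orthogonalProjection K v : E)

lemma pj_mem (K : Submodule ℝ E) (v : E) : pj K v ∈ K := (Submodule.orthogonalProjection K v).2

lemma pj_eq_self {K : Submodule ℝ E} {v : E} (hv : v ∈ K) : pj K v = v :=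
  Submodule.starProjection_eq_self_iff.2 hv

lemma inner_sub_pj {K : Submodule ℝ E} (v : E) {w : E} (hw : w ∈ K) :
    (inner ℝ (v - pj K v) w : ℝ) = 0 := by
  have h := Submodule.sub_starProjection_mem_orthogonal (K := K) v
  have := (Submodule.mem_orthogonal K _).1 h w hw
  rw [real_inner_comm]; exact this

lemma pj_sq (K : Submodule ℝ E) (v : E) :
    ‖v‖ ^ 2 = ‖pj K v‖ ^ 2 + ‖v - pj K v‖ ^ 2 := by
  have h : v = pj K v + (v - pj K v) := by abel
  calc ‖v‖ ^ 2 = ‖pj K v + (v - pj K v)‖ ^ 2 := by rw [← h]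
    _ = ‖pj K v‖ ^ 2 + 2 * inner ℝ (pj K v) (v - pj K v) + ‖v - pj K v‖ ^ 2 :=
        norm_add_sq_real _ _
    _ = ‖pj K v‖ ^ 2 + ‖v - pj K v‖ ^ 2 := by
        rw [real_inner_comm, inner_sub_pj v (pj_mem K v)]; ring

lemma pj_norm_le (K : Submodule ℝ E) (v : E) : ‖pj K v‖ ≤ ‖v‖ := by
  have h := pj_sq K v
  nlinarith [norm_nonneg (pj K v), norm_nonneg v, sq_nonneg ‖v - pj K v‖]

lemma pj_min {K : Submodule ℝ E} (v : E) {w : E} (hw : w ∈ K) :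
    ‖v - pj K v‖ ≤ ‖v - w‖ := by
  have h : v - w = (v - pj K v) + (pj K v - w) := by abel
  have hmem : pj K v - w ∈ K := K.sub_mem (pj_mem K v) hw
  have := norm_add_sq_real (v - pj K v) (pj K v - w)
  rw [← h, inner_sub_pj v hmem] at this
  nlinarith [norm_nonneg (v - pj K v), norm_nonneg (v - w), sq_nonneg ‖pj K v - w‖]

lemma pj_map_sub (K : Submodule ℝ E) (u v : E) : pj K (u - v) = pj K u - pj K v := by
  unfold pj; rw [map_sub]; rfl

lemma pj_nonexp {K : Submodule ℝ E} (v : E) {w : E} (hw : w ∈ K) :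
    ‖pj K v - w‖ ≤ ‖v - w‖ := by
  have : pj K v - w = pj K (v - w) := by rw [pj_map_sub, pj_eq_self hw]
  rw [this]; exact pj_norm_le K (v - w)

/-- Bounded linear regularity for a pair of subspaces of a finite-dimensional space. -/
lemma pair_BR (M N : Submodule ℝ E) : ∃ γ : ℝ, 1 ≤ γ ∧ ∀ z : E,
    ‖z - pj (M ⊓ N) z‖ ≤ γ * (‖z - pj M z‖ + ‖z - pj N z‖) := by
  classical
  set g : (↥M × ↥N) →ₗ[ℝ] E :=
    M.subtype.comp (LinearMap.fst ℝ ↥M ↥N) - N.subtype.comp (LinearMap.snd ℝ ↥M ↥N) with hg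
  have hgapply : ∀ p : ↥M × ↥N, g p = (p.1 : E) - (p.2 : E) := fun p => rfl
  have hrange : LinearMap.range g = M ⊔ N := by
    apply le_antisymm
    · rintro _ ⟨p, rfl⟩
      rw [hgapply]
      exact Submodule.sub_mem _ (Submodule.mem_sup_left p.1.2) (Submodule.mem_sup_right p.2.2)
    · rw [sup_le_iff]
      constructor
      · intro a ha; exact ⟨(⟨a, ha⟩, 0), by simp [hgapply]⟩
      · intro b hb; exact ⟨(0, ⟨-b, N.neg_mem hb⟩), by simp [hgapply]⟩
  have hmem : ∀ p, g p ∈ M ⊔ N := fun p => hrange ▸ LinearMap.mem_range_self g p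
  set g' : (↥M × ↥N) →ₗ[ℝ] ↥(M ⊔ N) := g.codRestrict (M ⊔ N) hmem with hg'
  have hsur : LinearMap.range g' = ⊤ := by
    rw [LinearMap.range_codRestrict, hrange]; exact Submodule.comap_subtype_self _
  obtain ⟨σ, hσ⟩ := g'.exists_rightInverse_of_surjective hsur
  set σL := LinearMap.toContinuousLinearMap σ with hσL
  set C := ‖σL‖ with hC
  have hC0 : 0 ≤ C := norm_nonneg σL
  refine ⟨C + 1, by linarith, fun z => ?_⟩
  set p : E := pj M z with hp
  set q : E := pj N z with hq
  have hpM : p ∈ M := (Submodule.orthogonalProjection M z).2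
  have hqN : q ∈ N := (Submodule.orthogonalProjection N z).2
  set w : ↥(M ⊔ N) := ⟨p - q, Submodule.sub_mem _ (Submodule.mem_sup_left hpM)
    (Submodule.mem_sup_right hqN)⟩ with hw
  set s := σ w with hs
  have hgs : (s.1 : E) - (s.2 : E) = p - q := by
    have h1 : g' (σ w) = w := by
      have := LinearMap.ext_iff.1 hσ w
      simpa using this
    have h2 : (g' (σ w) : E) = (w : E) := by rw [h1]
    rw [← hgapply s]
    exact h2
  have hvMN : p - (s.1 : E) ∈ M ⊓ N := by
    constructor
    · exact M.sub_mem hpM s.1.2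
    · have : p - (s.1 : E) = q - (s.2 : E) := by
        have h' := hgs
        rw [sub_eq_sub_iff_add_eq_add] at h' ⊢
        rw [add_comm (s.1:E) q] at h'
        exact h'.symm
      rw [this]; exact N.sub_mem hqN s.2.2
  have h1 : ‖z - pj (M ⊓ N) z‖ ≤ ‖z - (p - (s.1:E))‖ := pj_min z hvMN
  have h2 : ‖z - (p - (s.1:E))‖ ≤ ‖z - p‖ + ‖(s.1 : E)‖ := by
    have : z - (p - (s.1:E)) = (z - p) + (s.1:E) := by abel
    rw [this]; exact norm_add_le _ _
  have h3 : ‖(s.1 : E)‖ ≤ C * ‖(w : E)‖ := by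
    have e1 : ‖(s.1 : E)‖ = ‖s.1‖ := rfl
    have e2 : ‖s.1‖ ≤ ‖s‖ := norm_fst_le s
    have e3 : ‖s‖ = ‖σL w‖ := rfl
    have e4 : ‖σL w‖ ≤ C * ‖w‖ := σL.le_opNorm w
    have e5 : ‖w‖ = ‖(w : E)‖ := rfl
    calc ‖(s.1:E)‖ = ‖s.1‖ := e1
      _ ≤ ‖s‖ := e2
      _ = ‖σL w‖ := e3
      _ ≤ C * ‖w‖ := e4
      _ = C * ‖(w:E)‖ := by rw [e5]
  have h4 : ‖(w : E)‖ ≤ ‖z - p‖ + ‖z - q‖ := by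
    have h0 : (w : E) = p - q := rfl
    rw [h0]
    have : p - q = -(z - p) + (z - q) := by abel
    rw [this]
    exact (norm_add_le _ _).trans (by rw [norm_neg])
  have hd0 : 0 ≤ ‖z - q‖ := norm_nonneg _
  have hd1 : 0 ≤ ‖z - p‖ := norm_nonneg _
  nlinarith [h1, h2, h3, h4]

/-- Convergence of trajectories of iterated orthogonal projections taken from a
finite family of subspaces of a finite-dimensional real inner product space. -/
theorem traj_conv {k : ℕ} (L : Fin k → Submodule ℝ E) (j : ℕ → Fin k) (y : ℕ → E)
    (hy : ∀ m, y (m + 1) = pj (L (j m)) (y m)) : ∃ z, Tendsto y atTop (𝓝 z) := by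
  classical
  have hstep : ∀ t, ‖y (t+1)‖ ^ 2 + ‖y t - y (t+1)‖ ^ 2 = ‖y t‖ ^ 2 := by
    intro t; rw [hy t]; exact (pj_sq (L (j t)) (y t)).symm
  have htel : ∀ M, ∑ t ∈ Finset.range M, ‖y t - y (t+1)‖ ^ 2 = ‖y 0‖ ^ 2 - ‖y M‖ ^ 2 := by
    intro M; induction M with
    | zero => simp
    | succ M ih => rw [Finset.sum_range_succ, ih]; have := hstep M; linarith
  have hsummable : Summable (fun t => ‖y t - y (t+1)‖ ^ 2) := by
    apply summable_of_sum_range_le (c := ‖y 0‖ ^ 2) (fun n => sq_nonneg _)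
    intro M; rw [htel M]; nlinarith [sq_nonneg ‖y M‖]
  have hδ0 : ∀ δ : ℝ, 0 < δ → ∃ N, ∀ t, N ≤ t → ‖y t - y (t+1)‖ ≤ δ := by
    intro δ hδ
    have h2 := hsummable.tendsto_atTop_zero
    rw [Metric.tendsto_atTop] at h2
    obtain ⟨N, hN⟩ := h2 (δ ^ 2) (by positivity)
    refine ⟨N, fun t ht => ?_⟩
    have := hN t ht
    rw [Real.dist_eq, sub_zero, abs_of_nonneg (sq_nonneg _)] at this
    exact le_of_lt (lt_of_pow_lt_pow_left₀ 2 hδ.le this)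
  set Jinf : Finset (Fin k) := Finset.univ.filter (fun i => {m : ℕ | j m = i}.Infinite) with hJinf
  have hocc : ∀ i ∈ Jinf, ∀ N, ∃ m, N ≤ m ∧ j m = i := by
    intro i hi N
    have h := (Finset.mem_filter.1 hi).2
    obtain ⟨b, hb, hlt⟩ := h.exists_gt N
    exact ⟨b, hlt.le, hb⟩
  have hm0 : ∃ m0, ∀ m, m0 ≤ m → j m ∈ Jinf := by
    have hfin : ∀ i : Fin k, i ∉ Jinf → ∃ N, ∀ m, j m = i → m < N := by
      intro i hi
      have h : ¬ {m : ℕ | j m = i}.Infinite := by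
        intro hcon; exact hi (Finset.mem_filter.2 ⟨Finset.mem_univ i, hcon⟩)
      rw [Set.not_infinite] at h
      obtain ⟨N, hN⟩ := h.bddAbove
      exact ⟨N + 1, fun m hm => Nat.lt_succ_of_le (hN hm)⟩
    set G : Fin k → ℕ := fun i => if h : i ∈ Jinf then 0 else (hfin i h).choose with hG
    refine ⟨Finset.univ.sup G, fun m hm => ?_⟩
    by_contra hc
    have hGm : m < G (j m) := by
      rw [hG]; simp only [hc, dif_neg, not_false_iff]
      exact (hfin (j m) hc).choose_spec m rfl
    have : G (j m) ≤ Finset.univ.sup G := Finset.le_sup (Finset.mem_univ _)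
    omega
  obtain ⟨m0, hm0⟩ := hm0
  set H : Submodule ℝ E := Jinf.inf L with hH
  have hHle : ∀ i ∈ Jinf, H ≤ L i := fun i hi => Finset.inf_le hi
  have hFej : ∀ (hv : E), hv ∈ H → ∀ m, m0 ≤ m → ∀ p, ‖y (m + p) - hv‖ ≤ ‖y m - hv‖ := by
    intro hv hvH m hm p
    induction p with
    | zero => exact le_of_eq (by rw [Nat.add_zero])
    | succ p ih =>
      have h1 : y (m + p + 1) = pj (L (j (m + p))) (y (m + p)) := hy (m + p)
      have h2 : hv ∈ L (j (m + p)) := hHle _ (hm0 _ (by omega)) hvH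
      calc ‖y (m + (p+1)) - hv‖ = ‖pj (L (j (m+p))) (y (m+p)) - hv‖ := by
            rw [show m + (p+1) = (m+p)+1 from rfl, h1]
        _ ≤ ‖y (m+p) - hv‖ := pj_nonexp _ h2
        _ ≤ ‖y m - hv‖ := ih
  choose γf hγ1 hγBR using (fun (S : Finset (Fin k)) (c : Fin k) => pair_BR (S.inf L) (L c))
  set Γ : ℝ := 1 + ∑ p : Finset (Fin k) × Fin k, γf p.1 p.2 with hΓ
  have hγnn : ∀ (p : Finset (Fin k) × Fin k), 0 ≤ γf p.1 p.2 :=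
    fun p => le_trans zero_le_one (hγ1 p.1 p.2)
  have hΓ1 : 1 ≤ Γ := by
    rw [hΓ]
    have : 0 ≤ ∑ p : Finset (Fin k) × Fin k, γf p.1 p.2 :=
      Finset.sum_nonneg (fun p _ => hγnn p)
    linarith
  have hΓge : ∀ S c, γf S c ≤ Γ := by
    intro S c
    have h1 : γf S c ≤ ∑ p : Finset (Fin k) × Fin k, γf p.1 p.2 :=
      Finset.single_le_sum (f := fun p : Finset (Fin k) × Fin k => γf p.1 p.2)
        (fun p _ => hγnn p) (Finset.mem_univ (S, c))
    rw [hΓ]; linarith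
  set D : ℕ → ℝ := fun m => ‖y m - pj H (y m)‖ with hD
  have hDmono : ∀ m, m0 ≤ m → ∀ p, D (m + p) ≤ D m := by
    intro m hm p
    induction p with
    | zero => exact le_of_eq rfl
    | succ p ih =>
      have h1 : D (m + p + 1) ≤ ‖y (m + p + 1) - pj H (y (m + p))‖ :=
        pj_min _ (pj_mem H (y (m+p)))
      have h2 : ‖y (m + p + 1) - pj H (y (m + p))‖ ≤ ‖y (m+p) - pj H (y (m+p))‖ := by
        rw [hy (m+p)]
        exact pj_nonexp _ (hHle (j (m+p)) (hm0 _ (by omega)) (pj_mem H (y (m+p))))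
      calc D (m + (p+1)) = D ((m+p)+1) := by ring_nf
        _ ≤ ‖y (m + p + 1) - pj H (y (m + p))‖ := h1
        _ ≤ ‖y (m+p) - pj H (y (m+p))‖ := h2
        _ = D (m + p) := rfl
        _ ≤ D m := ih
  have hKey : ∀ ε : ℝ, 0 < ε → ∃ T, m0 ≤ T ∧ D T ≤ ε := by
    intro ε hε
    set δ : ℝ := ε / (Γ + 1) ^ (2 * k + 2) with hδdef
    have hΓ4 : (0:ℝ) < (Γ + 1) ^ (2 * k + 2) := by positivity
    have hδpos : 0 < δ := by positivity
    obtain ⟨N, hN⟩ := hδ0 δ hδpos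
    set M1 : ℕ := max N m0 with hM1
    have hM1N : N ≤ M1 := le_max_left _ _
    have hM1m0 : m0 ≤ M1 := le_max_right _ _
    set S : ℕ → Finset (Fin k) := fun t => (Finset.Ico M1 t).image j with hS
    have hInv : ∀ p : ℕ, ‖y (M1 + 1 + p) - pj ((S (M1 + 1 + p)).inf L) (y (M1 + 1 + p))‖
        ≤ δ * (Γ + 1) ^ (2 * (S (M1 + 1 + p)).card) := by
      intro p
      induction p with
      | zero =>
        have hS1 : S (M1 + 1) = {j M1} := by
          rw [hS]; simp [Finset.Ico_self, Nat.Ico_succ_right_eq_insert_Ico (le_refl M1)]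
        have : y (M1 + 1) ∈ (S (M1+1)).inf L := by
          rw [hS1, Finset.inf_singleton, hy M1]; exact pj_mem _ _
        rw [show M1 + 1 + 0 = M1 + 1 from rfl, pj_eq_self this, sub_self, norm_zero]
        positivity
      | succ p ih =>
        set t : ℕ := M1 + 1 + p with ht
        have htM1 : M1 ≤ t := by omega
        set c : Fin k := j t with hc
        have hSucc : S (t + 1) = insert c (S t) := by
          show Finset.image j (Finset.Ico M1 (t+1)) = insert c (Finset.image j (Finset.Ico M1 t))
          rw [Nat.Ico_succ_right_eq_insert_Ico (by omega : M1 ≤ t), Finset.image_insert]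
        have hyt1 : y (t+1) = pj (L c) (y t) := hy t
        have hyt1mem : y (t+1) ∈ L c := by rw [hyt1]; exact pj_mem _ _
        by_cases hcS : c ∈ S t
        · have hins : insert c (S t) = S t := Finset.insert_eq_self.2 hcS
          have hKle : (S t).inf L ≤ L c := Finset.inf_le hcS
          have h1 : ‖y (t+1) - pj ((S t).inf L) (y (t+1))‖
              ≤ ‖y (t+1) - pj ((S t).inf L) (y t)‖ := pj_min _ (pj_mem _ _)
          have h2 : ‖y (t+1) - pj ((S t).inf L) (y t)‖
              ≤ ‖y t - pj ((S t).inf L) (y t)‖ := by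
            rw [hyt1]
            exact pj_nonexp _ (hKle (pj_mem _ _))
          have hgoal : ‖y (t+1) - pj ((S (t+1)).inf L) (y (t+1))‖
              ≤ δ * (Γ + 1) ^ (2 * (S (t+1)).card) := by
            rw [hSucc, hins]
            exact le_trans h1 (le_trans h2 ih)
          exact hgoal
        · have hcard : (S (t+1)).card = (S t).card + 1 := by
            rw [hSucc, Finset.card_insert_of_notMem hcS]
          have hd1 : ‖y (t+1) - pj ((S t).inf L) (y (t+1))‖
              ≤ δ + δ * (Γ + 1) ^ (2 * (S t).card) := by
            have ha : ‖y (t+1) - pj ((S t).inf L) (y (t+1))‖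
                ≤ ‖y (t+1) - pj ((S t).inf L) (y t)‖ := pj_min _ (pj_mem _ _)
            have hb : ‖y (t+1) - pj ((S t).inf L) (y t)‖
                ≤ ‖y (t+1) - y t‖ + ‖y t - pj ((S t).inf L) (y t)‖ := by
              have : y (t+1) - pj ((S t).inf L) (y t)
                  = (y (t+1) - y t) + (y t - pj ((S t).inf L) (y t)) := by abel
              rw [this]; exact norm_add_le _ _
            have hstep' : ‖y (t+1) - y t‖ ≤ δ := by
              rw [norm_sub_rev]; exact hN t (by omega)
            calc ‖y (t+1) - pj ((S t).inf L) (y (t+1))‖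
                ≤ ‖y (t+1) - y t‖ + ‖y t - pj ((S t).inf L) (y t)‖ := le_trans ha hb
              _ ≤ δ + δ * (Γ + 1) ^ (2 * (S t).card) := add_le_add hstep' ih
          have hd2 : ‖y (t+1) - pj (L c) (y (t+1))‖ = 0 := by
            rw [pj_eq_self hyt1mem, sub_self, norm_zero]
          have hBR := hγBR (S t) c (y (t+1))
          have hK' : (S (t+1)).inf L = (S t).inf L ⊓ L c := by
            rw [hSucc, Finset.inf_insert, inf_comm]
          have hX : (1:ℝ) ≤ (Γ + 1) ^ (2 * (S t).card) := one_le_pow₀ (by linarith)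
          have hpow : (Γ + 1) ^ (2 * ((S t).card + 1))
              = (Γ + 1) ^ (2 * (S t).card) * (Γ + 1) ^ 2 := by
            rw [← pow_add]; ring_nf
          have hγΓ : γf (S t) c ≤ Γ := hΓge _ _
          have hγpos : (0:ℝ) ≤ γf (S t) c := hγnn (S t, c)
          calc ‖y (t+1) - pj ((S (t+1)).inf L) (y (t+1))‖
              = ‖y (t+1) - pj ((S t).inf L ⊓ L c) (y (t+1))‖ := by rw [hK']
            _ ≤ γf (S t) c * (‖y (t+1) - pj ((S t).inf L) (y (t+1))‖
                + ‖y (t+1) - pj (L c) (y (t+1))‖) := hBR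
            _ ≤ Γ * ((δ + δ * (Γ + 1) ^ (2 * (S t).card)) + 0) := by
                apply mul_le_mul hγΓ _ _ (by linarith)
                · rw [hd2]
                  exact add_le_add hd1 (le_refl 0)
                · positivity
            _ ≤ δ * (Γ + 1) ^ (2 * (S (t+1)).card) := by
                rw [hcard, hpow]
                set X : ℝ := (Γ + 1) ^ (2 * (S t).card) with hXdef
                have hX0 : (0:ℝ) ≤ X := le_trans zero_le_one hX
                nlinarith [mul_nonneg (mul_nonneg hδpos.le hX0) (sq_nonneg Γ),
                  mul_nonneg (mul_nonneg hδpos.le (le_trans zero_le_one hΓ1)) (sub_nonneg.2 hX),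
                  mul_nonneg hδpos.le hX0]
    have hoT : ∀ i : Fin k, ∃ m, i ∈ Jinf → (M1 ≤ m ∧ j m = i) := by
      intro i
      by_cases hi : i ∈ Jinf
      · obtain ⟨m, hm⟩ := hocc i hi M1; exact ⟨m, fun _ => hm⟩
      · exact ⟨0, fun h => absurd h hi⟩
    choose o ho using hoT
    set T : ℕ := max (M1 + 1) (Finset.univ.sup (fun i => o i + 1)) with hT
    have hTM1 : M1 + 1 ≤ T := le_max_left _ _
    have hJS : Jinf ⊆ S T := by
      intro i hi
      have h1 := ho i hi
      have h2 : o i + 1 ≤ T :=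
        le_trans (Finset.le_sup (f := fun i => o i + 1) (Finset.mem_univ i)) (le_max_right _ _)
      rw [hS]
      exact Finset.mem_image.2 ⟨o i, Finset.mem_Ico.2 ⟨h1.1, by omega⟩, h1.2⟩
    have hHST : (S T).inf L ≤ H := by
      rw [hH]; exact Finset.inf_mono hJS
    have hcardk : (S T).card ≤ k := by
      have := Finset.card_le_univ (S T)
      simpa using this
    have hDT : D T ≤ δ * (Γ + 1) ^ (2 * (S T).card) := by
      have h1 : D T ≤ ‖y T - pj ((S T).inf L) (y T)‖ :=
        pj_min _ (hHST (pj_mem _ _))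
      obtain ⟨p, hp⟩ : ∃ p, T = M1 + 1 + p := ⟨T - (M1+1), by omega⟩
      rw [hp] at h1 ⊢
      exact le_trans h1 (hInv p)
    refine ⟨T, by omega, ?_⟩
    have hpowle : (Γ + 1) ^ (2 * (S T).card) ≤ (Γ + 1) ^ (2 * k + 2) :=
      pow_le_pow_right₀ (by linarith) (by omega)
    calc D T ≤ δ * (Γ + 1) ^ (2 * (S T).card) := hDT
      _ ≤ δ * (Γ + 1) ^ (2 * k + 2) := by
          apply mul_le_mul_of_nonneg_left hpowle hδpos.le
      _ = ε := by rw [hδdef]; field_simp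
  have hcauchy : CauchySeq y := by
    rw [Metric.cauchySeq_iff']
    intro ε hε
    obtain ⟨T, hTm0, hDT⟩ := hKey (ε / 3) (by linarith)
    refine ⟨T, fun m hm => ?_⟩
    have hmem := pj_mem H (y T)
    have h1 : ‖y m - pj H (y T)‖ ≤ ‖y T - pj H (y T)‖ := by
      obtain ⟨p, rfl⟩ : ∃ p, m = T + p := ⟨m - T, by omega⟩
      exact hFej _ hmem T hTm0 p
    have h2 : dist (y m) (y T) ≤ ‖y m - pj H (y T)‖ + ‖y T - pj H (y T)‖ := by
      rw [dist_eq_norm]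
      have : y m - y T = (y m - pj H (y T)) - (y T - pj H (y T)) := by abel
      rw [this]
      exact norm_sub_le _ _
    have h3 : dist (y m) (y T) ≤ 2 * (ε / 3) := by
      have h4 := le_trans h2 (add_le_add h1 (le_refl _))
      have hDT' : ‖y T - pj H (y T)‖ ≤ ε / 3 := hDT
      linarith
    linarith
  exact cauchySeq_tendsto_of_complete hcauchy

end AuxProj

/-! ### Matrix glue -/

private lemma toEuclideanLin_mul_apply {n : ℕ} (M N : Matrix (Fin n) (Fin n) ℝ)
    (x : EuclideanSpace ℝ (Fin n)) :
    Matrix.toEuclideanLin (M * N) x = Matrix.toEuclideanLin M (Matrix.toEuclideanLin N x) := by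
  simp [Matrix.toEuclideanLin_apply, Matrix.mulVec_mulVec]

private lemma toEuclideanLin_one_apply {n : ℕ} (x : EuclideanSpace ℝ (Fin n)) :
    Matrix.toEuclideanLin (1 : Matrix (Fin n) (Fin n) ℝ) x = x := by
  simp [Matrix.toEuclideanLin_apply]

private lemma toEuclideanLin_single_apply {n : ℕ} (M : Matrix (Fin n) (Fin n) ℝ) (a b : Fin n) :
    (Matrix.toEuclideanLin M (EuclideanSpace.single b 1)) a = M a b := by
  rw [Matrix.toEuclideanLin_apply]
  show (M *ᵥ (WithLp.equiv 2 (Fin n → ℝ)) (EuclideanSpace.single b 1)) a = M a b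
  rw [show (WithLp.equiv 2 (Fin n → ℝ)) (EuclideanSpace.single b 1) = Pi.single b 1 from rfl]
  rw [Matrix.mulVec_single]
  simp

private lemma matrix_tendsto_of_entries {n : ℕ} {X : ℕ → Matrix (Fin n) (Fin n) ℝ}
    {Y : Matrix (Fin n) (Fin n) ℝ}
    (h : ∀ a b, Tendsto (fun m => X m a b) atTop (𝓝 (Y a b))) :
    Tendsto X atTop (𝓝 Y) := by
  refine Metric.tendsto_atTop.2 ?_
  intro ε hε
  have h2 : ∀ᶠ m in atTop, ∀ a b, dist (X m a b) (Y a b) ≤ ε / 2 := by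
    rw [Filter.eventually_all]
    intro a
    rw [Filter.eventually_all]
    intro b
    have := (h a b).eventually (Metric.ball_mem_nhds (Y a b) (by positivity : 0 < ε/2))
    filter_upwards [this] with m hm using le_of_lt hm
  obtain ⟨N, hN⟩ := h2.exists_forall_of_atTop
  refine ⟨N, fun m hm => ?_⟩
  have hle : dist (X m) Y ≤ ε / 2 := by
    rw [dist_eq_norm]
    rw [Matrix.norm_le_iff (by positivity)]
    intro a b
    have := hN m hm a b
    rw [Matrix.sub_apply]
    rw [Real.dist_eq] at this
    simpa using this
  linarith

private lemma matrix_entry_tendsto {n : ℕ} {X : ℕ → Matrix (Fin n) (Fin n) ℝ}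
    {Y : Matrix (Fin n) (Fin n) ℝ} (h : Tendsto X atTop (𝓝 Y)) (a b : Fin n) :
    Tendsto (fun m => X m a b) atTop (𝓝 (Y a b)) := by
  replace h := Metric.tendsto_atTop.1 h
  rw [Metric.tendsto_atTop]
  intro ε hε
  obtain ⟨N, hN⟩ := h ε hε
  refine ⟨N, fun m hm => ?_⟩
  have h1 := hN m hm
  rw [dist_eq_norm] at h1
  have h2 : ‖(X m - Y) a b‖ ≤ ‖X m - Y‖ := Matrix.norm_entry_le_entrywise_sup_norm _
  rw [Real.dist_eq]
  have h3 : (X m - Y) a b = X m a b - Y a b := Matrix.sub_apply _ _ _ _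
  calc |X m a b - Y a b| = ‖(X m - Y) a b‖ := by rw [h3]; rfl
    _ ≤ ‖X m - Y‖ := h2
    _ < ε := h1

private lemma matrix_symm_of_proj {n : ℕ} (A : Matrix (Fin n) (Fin n) ℝ)
    (L : Submodule ℝ (EuclideanSpace ℝ (Fin n)))
    (h : ∀ x, Matrix.toEuclideanLin A x = (Submodule.orthogonalProjection L x : EuclideanSpace ℝ (Fin n))) :
    Aᵀ = A := by
  have hH : A.IsHermitian := by
    rw [Matrix.isHermitian_iff_isSymmetric]
    intro x y
    rw [h x, h y]
    exact Submodule.inner_starProjection_left_eq_right L x y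
  ext a b
  have := congrFun (congrFun hH b) a
  simpa [Matrix.conjTranspose_apply] using this.symm

/-- a finite family of orthogonal projection matrices (each `A_j`
acting as the orthogonal projection of ℝⁿ onto some linear subspace `L_j`)
is LCP, RCP, and transversal. -/
theorem orthogonal_projections_cp {n k : ℕ}
    (A : Fin k → Matrix (Fin n) (Fin n) ℝ)
    (hproj : ∀ j : Fin k, ∃ L : Submodule ℝ (EuclideanSpace ℝ (Fin n)),
      ∀ x : EuclideanSpace ℝ (Fin n),
        Matrix.toEuclideanLin (A j) x
          = (Submodule.orthogonalProjection L x : EuclideanSpace ℝ (Fin n))) :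
    IsLCP A ∧ IsRCP A ∧ IsTransversal A := by
  classical
  choose L hL using hproj
  have hsymm : ∀ i, (A i)ᵀ = A i := fun i => matrix_symm_of_proj (A i) (L i) (hL i)
  -- LCP
  have hLCP : IsLCP A := by
    intro j
    have htraj : ∀ b : Fin n, ∃ z, Tendsto
        (fun m => Matrix.toEuclideanLin (leftProd A j m) (EuclideanSpace.single b 1))
        atTop (𝓝 z) := by
      intro b
      apply traj_conv L j
      intro m
      show Matrix.toEuclideanLin (leftProd A j (m+1)) (EuclideanSpace.single b 1)
          = pj (L (j m)) (Matrix.toEuclideanLin (leftProd A j m) (EuclideanSpace.single b 1))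
      rw [show leftProd A j (m+1) = A (j m) * leftProd A j m from rfl,
        toEuclideanLin_mul_apply, hL (j m)]
      rfl
    choose z hz using htraj
    refine ⟨fun a b => z b a, matrix_tendsto_of_entries (fun a b => ?_)⟩
    have hcont : Continuous (fun v : EuclideanSpace ℝ (Fin n) => v a) :=
      (continuous_apply a).comp (PiLp.continuous_ofLp 2 _)
    have h1 := (hcont.tendsto (z b)).comp (hz b)
    apply h1.congr
    intro m
    exact toEuclideanLin_single_apply (leftProd A j m) a b
  -- RCP
  have hRCP : IsRCP A := by
    intro j
    obtain ⟨Lm, hLm⟩ := hLCP j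
    have hRL : ∀ m, rightProd A j m = (leftProd A j m)ᵀ := by
      intro m
      induction m with
      | zero =>
        show (1 : Matrix (Fin n) (Fin n) ℝ) = (1 : Matrix (Fin n) (Fin n) ℝ)ᵀ
        rw [Matrix.transpose_one]
      | succ m ih =>
        show rightProd A j m * A (j m) = (A (j m) * leftProd A j m)ᵀ
        rw [Matrix.transpose_mul, ← ih, hsymm]
    refine ⟨Lmᵀ, matrix_tendsto_of_entries (fun a b => ?_)⟩
    have h1 := matrix_entry_tendsto hLm b a
    apply h1.congr
    intro m
    rw [hRL m]
    rfl
  refine ⟨hLCP, hRCP, ?_, ?_⟩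
  -- zero transversal
  · intro J'
    rw [eq_bot_iff]
    rintro v ⟨hvN, hvR⟩
    have hvN' : ∀ i ∈ J', (1 - A i) *ᵥ v = 0 := by
      intro i hi
      have h1 : v ∈ LinearMap.ker ((1 - A i).mulVecLin) := by
        have := (Submodule.mem_iInf _).1 hvN i
        exact (Submodule.mem_iInf _).1 this hi
      simpa [Matrix.mulVecLin_apply, Matrix.sub_mulVec] using h1
    set f : (Fin n → ℝ) →ₗ[ℝ] ℝ := {
      toFun := fun w => v ⬝ᵥ w
      map_add' := fun a b => dotProduct_add v a b
      map_smul' := fun c w => by simp } with hf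
    have hRker : Rspace A J' ≤ LinearMap.ker f := by
      apply iSup₂_le
      intro i hi
      rintro _ ⟨u, rfl⟩
      show v ⬝ᵥ ((1 - A i).mulVecLin u) = 0
      rw [Matrix.mulVecLin_apply, Matrix.dotProduct_mulVec, ← Matrix.mulVec_transpose,
        Matrix.transpose_sub, Matrix.transpose_one, hsymm, hvN' i hi, zero_dotProduct]
    have hv0 : v ⬝ᵥ v = 0 := hRker hvR
    have : v = 0 := dotProduct_self_eq_zero.1 hv0
    simp [this]
  -- full transversal
  · intro J'
    set e := WithLp.linearEquiv 2 ℝ (Fin n → ℝ) with he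
    set W : Submodule ℝ (Fin n → ℝ) := Nspace A J' ⊔ Rspace A J' with hW
    set W' : Submodule ℝ (EuclideanSpace ℝ (Fin n)) := W.comap (e : _ →ₗ[ℝ] _) with hW'
    have hW'top : W' = ⊤ := by
      rw [← Submodule.orthogonal_eq_bot_iff]
      rw [eq_bot_iff]
      intro x hx
      have hxo := (Submodule.mem_orthogonal W' x).1 hx
      -- x is orthogonal to everything in W'
      have hxN : ∀ i ∈ J', (1 - A i) *ᵥ (e x) = 0 := by
        intro i hi
        have hrange : ∀ u : Fin n → ℝ, ((1 - A i) *ᵥ u) ∈ W := by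
          intro u
          apply Submodule.mem_sup_right
          have h1 : (1 - A i).mulVecLin u ∈ LinearMap.range ((1 - A i).mulVecLin) :=
            LinearMap.mem_range_self _ u
          have h2 : LinearMap.range ((1 - A i).mulVecLin) ≤ Rspace A J' :=
            le_iSup₂ (f := fun (i : Fin k) (_ : i ∈ J') =>
              LinearMap.range ((1 - A i).mulVecLin)) i hi
          exact h2 h1
        have hdot : ∀ u : Fin n → ℝ, ((1 - A i) *ᵥ u) ⬝ᵥ (e x) = 0 := by
          intro u
          have hmem : (e.symm ((1 - A i) *ᵥ u)) ∈ W' := by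
            rw [hW', Submodule.mem_comap]
            show (e : WithLp 2 (Fin n → ℝ) →ₗ[ℝ] (Fin n → ℝ)) (e.symm ((1 - A i) *ᵥ u)) ∈ W
            have h9 : (e : WithLp 2 (Fin n → ℝ) →ₗ[ℝ] (Fin n → ℝ)) (e.symm ((1 - A i) *ᵥ u))
                = (1 - A i) *ᵥ u := e.apply_symm_apply _
            rw [h9]
            exact hrange u
          have h0 := hxo _ hmem
          rw [PiLp.inner_apply] at h0
          have : ((1 - A i) *ᵥ u) ⬝ᵥ (e x) = ∑ l, (e.symm ((1 - A i) *ᵥ u)) l * x l := by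
            apply Finset.sum_congr rfl
            intro l _
            rfl
          rw [this]
          simpa [RCLike.inner_apply, mul_comm] using h0
        have hchosen := hdot ((1 - A i) *ᵥ (e x))
        rw [dotProduct_comm, Matrix.dotProduct_mulVec, ← Matrix.mulVec_transpose,
          Matrix.transpose_sub, Matrix.transpose_one, hsymm] at hchosen
        exact dotProduct_self_eq_zero.1 (by rwa [dotProduct_comm] at hchosen)
      have hxW : x ∈ W' := by
        rw [hW', Submodule.mem_comap]
        apply Submodule.mem_sup_left
        rw [Nspace]
        rw [Submodule.mem_iInf]
        intro i
        rw [Submodule.mem_iInf]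
        intro hi
        rw [LinearMap.mem_ker, Matrix.mulVecLin_apply]
        exact hxN i hi
      have : (inner ℝ x x : ℝ) = 0 := hxo x hxW
      exact inner_self_eq_zero.1 this
    rw [Submodule.eq_top_iff']
    intro x
    have hx : e.symm x ∈ W' := by rw [hW'top]; trivial
    rw [hW', Submodule.mem_comap] at hx
    have h9 : (e : WithLp 2 (Fin n → ℝ) →ₗ[ℝ] (Fin n → ℝ)) (e.symm x) = x := e.apply_symm_apply _
    rwa [h9] at hx
end

section
/- Let Σ = {A_j : j ∈ J} be a finite set of real n×n matrices such that Σ is LCP and ∩_{j∈J} ker(I − A_j) = {0}. If (j_i)_{i≥1} is a sequence in J in which every element of J occurs infinitely many times, then the right products A_{j_1} A_{j_2} ··· A_{j_m} converge to the zero matrix as m → ∞. -/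
open Filter Topology Matrix

attribute [local instance] Matrix.normedAddCommGroup

attribute [local instance] Matrix.normedSpace
set_option maxHeartbeats 1000000

namespace DLaux

variable {n k : ℕ}

/-- product of a word, first letter applied first (i.e. rightmost factor). -/
noncomputable def Lp (A : Fin k → Matrix (Fin n) (Fin n) ℝ) :
    List (Fin k) → Matrix (Fin n) (Fin n) ℝ
  | [] => 1
  | a :: t => Lp A t * A a

/-- product of a word in written order. -/
noncomputable def RP (A : Fin k → Matrix (Fin n) (Fin n) ℝ) (w : List (Fin k)) :
    Matrix (Fin n) (Fin n) ℝ := Lp A w.reverse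

variable (A : Fin k → Matrix (Fin n) (Fin n) ℝ)

lemma Lp_nil : Lp A ([] : List (Fin k)) = 1 := rfl

lemma Lp_cons (a : Fin k) (t : List (Fin k)) : Lp A (a :: t) = Lp A t * A a := rfl

lemma Lp_append (w₁ w₂ : List (Fin k)) : Lp A (w₁ ++ w₂) = Lp A w₂ * Lp A w₁ := by
  induction w₁ with
  | nil => simp [Lp_nil]
  | cons a t ih => simp only [List.cons_append, Lp_cons, ih, mul_assoc]

lemma Lp_snoc (w : List (Fin k)) (a : Fin k) : Lp A (w ++ [a]) = A a * Lp A w := by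
  rw [Lp_append]; simp [Lp_cons, Lp_nil]

lemma RP_append (w₁ w₂ : List (Fin k)) : RP A (w₁ ++ w₂) = RP A w₁ * RP A w₂ := by
  unfold RP; rw [List.reverse_append, Lp_append]

lemma RP_reverse (w : List (Fin k)) : RP A w.reverse = Lp A w := by
  unfold RP; rw [List.reverse_reverse]

/-- the word of the first `m` letters of a sequence. -/
def wd (σ : ℕ → Fin k) (m : ℕ) : List (Fin k) := List.ofFn (fun i : Fin m => σ i)

lemma wd_zero (σ : ℕ → Fin k) : wd σ 0 = [] := rfl

lemma wd_succ (σ : ℕ → Fin k) (m : ℕ) : wd σ (m + 1) = wd σ m ++ [σ m] := by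
  unfold wd
  rw [List.ofFn_succ' (f := fun i : Fin (m+1) => σ i), List.concat_eq_append]
  simp

lemma wd_length (σ : ℕ → Fin k) (m : ℕ) : (wd σ m).length = m := by simp [wd]

lemma leftProd_eq (σ : ℕ → Fin k) : ∀ m, leftProd A σ m = Lp A (wd σ m)
  | 0 => rfl
  | m + 1 => by
      rw [leftProd, leftProd_eq σ m, wd_succ, Lp_snoc]

lemma rightProd_eq (σ : ℕ → Fin k) : ∀ m, rightProd A σ m = RP A (wd σ m)
  | 0 => rfl
  | m + 1 => by
      rw [rightProd, rightProd_eq σ m, wd_succ, RP_append]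
      congr 1
      simp [RP, Lp_cons, Lp_nil]

lemma rightProd_split (j : ℕ → Fin k) (p : ℕ) : ∀ d,
    rightProd A j (p + d) = rightProd A j p * rightProd A (fun i => j (p + i)) d
  | 0 => by simp [rightProd]
  | d + 1 => by
      show rightProd A j (p + d + 1) = _
      rw [rightProd, rightProd_split j p d, rightProd, mul_assoc]

end DLaux

namespace DLaux

variable {n k : ℕ} (A : Fin k → Matrix (Fin n) (Fin n) ℝ)

lemma mulVec_norm_le (X : Matrix (Fin n) (Fin n) ℝ) (x : Fin n → ℝ) :
    ‖X *ᵥ x‖ ≤ (n : ℝ) * ‖X‖ * ‖x‖ := by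
  have h0 : (0:ℝ) ≤ (n : ℝ) * ‖X‖ * ‖x‖ := by positivity
  rw [pi_norm_le_iff_of_nonneg h0]
  intro i
  have : (X *ᵥ x) i = ∑ l, X i l * x l := rfl
  rw [this]
  calc ‖∑ l, X i l * x l‖ ≤ ∑ l, ‖X i l * x l‖ := norm_sum_le _ _
    _ ≤ ∑ _l : Fin n, ‖X‖ * ‖x‖ := by
        refine Finset.sum_le_sum fun l _ => ?_
        rw [norm_mul]
        exact mul_le_mul (Matrix.norm_entry_le_entrywise_sup_norm X)
          (norm_le_pi_norm x l) (norm_nonneg _) (norm_nonneg _)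
    _ = (n : ℝ) * ‖X‖ * ‖x‖ := by
        rw [Finset.sum_const, Finset.card_univ, Fintype.card_fin, nsmul_eq_mul, mul_assoc]

lemma norm_le_of_vecbound {X : Matrix (Fin n) (Fin n) ℝ} {C : ℝ} (hC : 0 ≤ C)
    (h : ∀ x, ‖X *ᵥ x‖ ≤ C * ‖x‖) : ‖X‖ ≤ C := by
  rw [Matrix.norm_le_iff hC]
  intro i l
  have h1 := h (Pi.single l 1)
  rw [Matrix.mulVec_single] at h1
  have h2 : ‖Pi.single (M := fun _ : Fin n => ℝ) l (1:ℝ)‖ = 1 := by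
    rw [Pi.norm_single]; simp
  have h3 : ‖X i l‖ ≤ ‖fun i' => X i' l * 1‖ := by
    have := norm_le_pi_norm (fun i' => X i' l * 1) i
    simpa using this
  calc ‖X i l‖ ≤ ‖fun i' => X i' l * 1‖ := h3
    _ ≤ C * ‖Pi.single (M := fun _ : Fin n => ℝ) l (1:ℝ)‖ := h1
    _ = C := by rw [h2, mul_one]

lemma tendsto_mulVec {ι : Type*} {l : Filter ι} {X : ι → Matrix (Fin n) (Fin n) ℝ}
    {P : Matrix (Fin n) (Fin n) ℝ} (h : Tendsto X l (𝓝 P)) (x : Fin n → ℝ) :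
    Tendsto (fun i => X i *ᵥ x) l (𝓝 (P *ᵥ x)) := by
  have hc : Continuous fun Y : Matrix (Fin n) (Fin n) ℝ => Y *ᵥ x := by
    apply continuous_pi
    intro i
    simp only [Matrix.mulVec, dotProduct]
    exact continuous_finset_sum _ fun l _ =>
      ((continuous_apply l).comp (continuous_apply i)).fun_mul continuous_const
  exact (hc.tendsto P).comp h

lemma tendsto_matmul {ι : Type*} {l : Filter ι} {X Y : ι → Matrix (Fin n) (Fin n) ℝ}
    {P Q : Matrix (Fin n) (Fin n) ℝ} (hX : Tendsto X l (𝓝 P)) (hY : Tendsto Y l (𝓝 Q)) :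
    Tendsto (fun i => X i * Y i) l (𝓝 (P * Q)) := by
  have hc : Continuous fun p : Matrix (Fin n) (Fin n) ℝ × Matrix (Fin n) (Fin n) ℝ =>
      p.1 * p.2 := by
    apply continuous_pi; intro i; apply continuous_pi; intro jj
    simp only [Matrix.mul_apply]
    exact continuous_finset_sum _ fun l _ =>
      (((continuous_apply l).comp ((continuous_apply i).comp continuous_fst)).fun_mul
        ((continuous_apply jj).comp ((continuous_apply l).comp continuous_snd)))
  exact (hc.tendsto (P, Q)).comp (hX.prodMk_nhds hY)

lemma tendsto_matpow {X : ℕ → Matrix (Fin n) (Fin n) ℝ} {P : Matrix (Fin n) (Fin n) ℝ}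
    (h : Tendsto X atTop (𝓝 P)) (s : ℕ) :
    Tendsto (fun i => X i ^ s) atTop (𝓝 (P ^ s)) := by
  induction s with
  | zero => simpa using tendsto_const_nhds
  | succ s ih =>
      have := tendsto_matmul ih h
      simpa [pow_succ] using this

lemma vecbound_of_tendsto {X : ℕ → Matrix (Fin n) (Fin n) ℝ} {P : Matrix (Fin n) (Fin n) ℝ}
    {C : ℝ} (h : Tendsto X atTop (𝓝 P)) (hb : ∀ i x, ‖X i *ᵥ x‖ ≤ C * ‖x‖) :
    ∀ x, ‖P *ᵥ x‖ ≤ C * ‖x‖ := by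
  intro x
  exact le_of_tendsto ((tendsto_mulVec h x).norm) (Eventually.of_forall fun i => hb i x)

end DLaux

namespace DLaux

variable {n k : ℕ}

def cum (w : ℕ → List (Fin k)) : ℕ → ℕ
  | 0 => 0
  | t + 1 => cum w t + (w t).length

def pl (w : ℕ → List (Fin k)) : ℕ → List (Fin k)
  | 0 => []
  | t + 1 => pl w t ++ w t

lemma pl_length (w : ℕ → List (Fin k)) : ∀ t, (pl w t).length = cum w t
  | 0 => rfl
  | t + 1 => by rw [pl, cum, List.length_append, pl_length w t]

lemma pl_prefix (w : ℕ → List (Fin k)) {s t : ℕ} (h : s ≤ t) : pl w s <+: pl w t := by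
  induction t with
  | zero => rw [Nat.le_zero.mp h]
  | succ t ih =>
      rcases Nat.lt_or_ge s (t + 1) with h' | h'
      · exact (ih (Nat.lt_succ_iff.mp h')).trans ⟨w t, rfl⟩
      · rw [Nat.le_antisymm h h']

lemma cum_ge (w : ℕ → List (Fin k)) (hw : ∀ t, w t ≠ []) : ∀ t, t ≤ cum w t
  | 0 => Nat.zero_le _
  | t + 1 => by
      rw [cum]
      have := List.length_pos_iff.mpr (hw t)
      have := cum_ge w hw t
      omega

lemma cum_strict (w : ℕ → List (Fin k)) (hw : ∀ t, w t ≠ []) : StrictMono (cum w) := by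
  apply strictMono_nat_of_lt_succ
  intro t
  rw [cum]
  have := List.length_pos_iff.mpr (hw t)
  omega

variable [Nonempty (Fin k)]

noncomputable def cseq (w : ℕ → List (Fin k)) (i : ℕ) : Fin k :=
  (pl w (i + 1)).getD i (Classical.arbitrary _)

lemma getD_eq_of_prefix {l₁ l₂ : List (Fin k)} (h : l₁ <+: l₂) {i : ℕ}
    (hi : i < l₁.length) (d : Fin k) : l₁.getD i d = l₂.getD i d := by
  obtain ⟨r, rfl⟩ := h
  rw [List.getD_eq_getElem?_getD, List.getD_eq_getElem?_getD,
    List.getElem?_append_left hi]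

lemma cseq_eq_getD (w : ℕ → List (Fin k)) (hw : ∀ t, w t ≠ []) {t i : ℕ}
    (hit : i < cum w t) : cseq w i = (pl w t).getD i (Classical.arbitrary _) := by
  unfold cseq
  rcases le_total (i + 1) t with h | h
  · exact getD_eq_of_prefix (pl_prefix w h)
      (by rw [pl_length]; exact lt_of_lt_of_le (Nat.lt_succ_self i) (cum_ge w hw (i+1))) _
  · exact (getD_eq_of_prefix (pl_prefix w h) (by rw [pl_length]; exact hit) _).symm

lemma wd_cseq (w : ℕ → List (Fin k)) (hw : ∀ t, w t ≠ []) (t : ℕ) :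
    wd (cseq w) (cum w t) = pl w t := by
  apply List.ext_getElem
  · rw [wd_length, pl_length]
  · intro i h1 h2
    rw [wd_length] at h1
    unfold wd
    show (List.ofFn fun (q : Fin (cum w t)) => cseq w q)[i]'(by simpa using h1) = _
    rw [List.getElem_ofFn]
    rw [cseq_eq_getD w hw h1]
    rw [List.getD_eq_getElem?_getD, List.getElem?_eq_getElem h2, Option.getD_some]

lemma cseq_io (w : ℕ → List (Fin k)) (hw : ∀ t, w t ≠ [])
    (hall : ∀ t a, a ∈ w t) (a : Fin k) (N : ℕ) :
    ∃ m, N ≤ m ∧ cseq w m = a := by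
  obtain ⟨p, hp, hpa⟩ := List.mem_iff_getElem.mp (hall N a)
  refine ⟨cum w N + p, le_trans (cum_ge w hw N) (Nat.le_add_right _ _), ?_⟩
  have hlt : cum w N + p < cum w (N + 1) := by
    rw [cum]; omega
  rw [cseq_eq_getD w hw hlt]
  have hlen : cum w N + p < (pl w (N+1)).length := by rw [pl_length]; exact hlt
  rw [List.getD_eq_getElem?_getD, List.getElem?_eq_getElem hlen, Option.getD_some]
  show (pl w N ++ w N)[cum w N + p]'(by rw [List.length_append, pl_length]; omega) = a
  have hside : (pl w N).length ≤ cum w N + p := by rw [pl_length]; omega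
  rw [List.getElem_append_right hside]
  have hidx : cum w N + p - (pl w N).length = p := by rw [pl_length]; omega
  simp only [hidx]
  exact hpa

end DLaux

namespace DLaux

variable {n k : ℕ} (A : Fin k → Matrix (Fin n) (Fin n) ℝ)

/-- vectors with bounded product orbit. -/
def VV : Submodule ℝ (Fin n → ℝ) where
  carrier := {x | ∃ C : ℝ, ∀ w : List (Fin k), ‖Lp A w *ᵥ x‖ ≤ C}
  add_mem' := by
    rintro x y ⟨C₁, h₁⟩ ⟨C₂, h₂⟩
    refine ⟨C₁ + C₂, fun w => ?_⟩
    have : Lp A w *ᵥ (x + y) = Lp A w *ᵥ x + Lp A w *ᵥ y := Matrix.mulVec_add _ _ _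
    rw [this]
    exact (norm_add_le _ _).trans (add_le_add (h₁ w) (h₂ w))
  zero_mem' := ⟨0, fun w => by simp [Matrix.mulVec_zero]⟩
  smul_mem' := by
    rintro c x ⟨C, h⟩
    refine ⟨‖c‖ * C, fun w => ?_⟩
    have : Lp A w *ᵥ (c • x) = c • (Lp A w *ᵥ x) := (Matrix.mulVec_smul _ _ _)
    rw [this, norm_smul]
    exact mul_le_mul_of_nonneg_left (h w) (norm_nonneg c)

lemma mem_VV {x : Fin n → ℝ} :
    x ∈ VV A ↔ ∃ C : ℝ, ∀ w : List (Fin k), ‖Lp A w *ᵥ x‖ ≤ C := Iff.rfl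

lemma VV_unif : ∃ C : ℝ, 1 ≤ C ∧ ∀ z ∈ VV A, ∀ w : List (Fin k), ‖Lp A w *ᵥ z‖ ≤ C * ‖z‖ := by
  classical
  set g : List (Fin k) → (↥(VV A) →L[ℝ] (Fin n → ℝ)) := fun w =>
    LinearMap.toContinuousLinearMap ((Matrix.mulVecLin (Lp A w)).comp (VV A).subtype) with hg
  have hgapp : ∀ (w : List (Fin k)) (z : ↥(VV A)), g w z = Lp A w *ᵥ (z : Fin n → ℝ) := by
    intro w z
    simp [hg, Matrix.mulVecLin_apply]
  have hpt : ∀ z : ↥(VV A), ∃ C : ℝ, ∀ w, ‖g w z‖ ≤ C := by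
    intro z
    obtain ⟨C, hC⟩ := z.2
    exact ⟨C, fun w => by rw [hgapp]; exact hC w⟩
  obtain ⟨C', hC'⟩ := banach_steinhaus hpt
  refine ⟨max C' 1, le_max_right _ _, fun z hz w => ?_⟩
  have := (g w).le_opNorm ⟨z, hz⟩
  rw [hgapp] at this
  have hzn : ‖(⟨z, hz⟩ : ↥(VV A))‖ = ‖z‖ := rfl
  rw [hzn] at this
  exact this.trans (mul_le_mul_of_nonneg_right ((hC' w).trans (le_max_left _ _)) (norm_nonneg z))

lemma exists_blowup {nA : ℝ} (hnA0 : 0 ≤ nA)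
    (hnA : ∀ (a : Fin k) (y : Fin n → ℝ), ‖A a *ᵥ y‖ ≤ nA * ‖y‖)
    {CV : ℝ} (hCV0 : 0 ≤ CV)
    (hCV : ∀ z ∈ VV A, ∀ w : List (Fin k), ‖Lp A w *ᵥ z‖ ≤ CV * ‖z‖)
    {x : Fin n → ℝ} (hx : x ∉ VV A) {B : ℝ} (hB : ‖x‖ < B) :
    ∃ w : List (Fin k), w ≠ [] ∧ B ≤ ‖Lp A w *ᵥ x‖ ∧ Lp A w *ᵥ x ∉ VV A := by
  classical
  by_contra hcon
  push_neg at hcon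
  -- hcon : ∀ w, w ≠ [] → B ≤ ‖Lp A w *ᵥ x‖ → Lp A w *ᵥ x ∈ VV A
  apply hx
  rw [mem_VV]
  refine ⟨max B (CV * (nA * B)), fun w => ?_⟩
  by_cases hcr : ∃ s, s ≤ w.length ∧ B ≤ ‖Lp A (w.take s) *ᵥ x‖
  · obtain ⟨hs₀len, hs₀B⟩ := Nat.find_spec hcr
    have hmin : ∀ t < Nat.find hcr, t ≤ w.length → ‖Lp A (w.take t) *ᵥ x‖ < B := by
      intro t ht htlen
      have := Nat.find_min hcr ht
      push_neg at this
      exact this htlen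
    have hs₀pos : 0 < Nat.find hcr := by
      rcases Nat.eq_zero_or_pos (Nat.find hcr) with h0 | h
      · exfalso
        have : B ≤ ‖Lp A (w.take 0) *ᵥ x‖ := by rw [← h0]; exact hs₀B
        simp only [List.take_zero] at this
        rw [Lp_nil, Matrix.one_mulVec] at this
        exact absurd this (not_le.mpr hB)
      · exact h
    obtain ⟨t, hst⟩ : ∃ t, Nat.find hcr = t + 1 := ⟨Nat.find hcr - 1, by omega⟩
    rw [hst] at hs₀len hs₀B
    have htlen : t < w.length := by omega
    have htB : ‖Lp A (w.take t) *ᵥ x‖ < B := hmin t (by omega) (by omega)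
    set z := Lp A (w.take (t + 1)) *ᵥ x with hzdef
    have hzV : z ∈ VV A := by
      refine hcon _ ?_ hs₀B
      refine List.ne_nil_of_length_pos ?_
      rw [List.length_take]
      exact lt_min_iff.mpr ⟨Nat.succ_pos t, by omega⟩
    have hznorm : ‖z‖ ≤ nA * B := by
      have htake : w.take t ++ [w[t]] = w.take (t + 1) := List.take_concat_get' w t htlen
      have : z = A w[t] *ᵥ (Lp A (w.take t) *ᵥ x) := by
        rw [hzdef, ← htake, Lp_snoc, ← Matrix.mulVec_mulVec]
      rw [this]
      calc ‖A w[t] *ᵥ (Lp A (w.take t) *ᵥ x)‖ ≤ nA * ‖Lp A (w.take t) *ᵥ x‖ := hnA _ _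
        _ ≤ nA * B := mul_le_mul_of_nonneg_left (le_of_lt htB) hnA0
    have hw : w = w.take (t+1) ++ w.drop (t+1) := (List.take_append_drop _ w).symm
    calc ‖Lp A w *ᵥ x‖ = ‖Lp A (w.drop (t+1)) *ᵥ z‖ := by
          conv_lhs => rw [hw]
          rw [Lp_append, ← Matrix.mulVec_mulVec, hzdef]
      _ ≤ CV * ‖z‖ := hCV z hzV _
      _ ≤ CV * (nA * B) := mul_le_mul_of_nonneg_left hznorm hCV0
      _ ≤ max B (CV * (nA * B)) := le_max_right _ _
  · push_neg at hcr
    have := hcr w.length le_rfl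
    rw [List.take_length] at this
    exact (le_of_lt this).trans (le_max_left _ _)

end DLaux

namespace DLaux

variable {n k : ℕ} (A : Fin k → Matrix (Fin n) (Fin n) ℝ)

lemma exists_nA [Nonempty (Fin k)] :
    ∃ nA : ℝ, 0 ≤ nA ∧ ∀ (a : Fin k) (y : Fin n → ℝ), ‖A a *ᵥ y‖ ≤ nA * ‖y‖ := by
  refine ⟨∑ a : Fin k, (n : ℝ) * ‖A a‖, Finset.sum_nonneg fun a _ => by positivity, ?_⟩
  intro a y
  calc ‖A a *ᵥ y‖ ≤ (n : ℝ) * ‖A a‖ * ‖y‖ := mulVec_norm_le _ _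
    _ ≤ (∑ a : Fin k, (n : ℝ) * ‖A a‖) * ‖y‖ := by
        apply mul_le_mul_of_nonneg_right _ (norm_nonneg y)
        exact Finset.single_le_sum (f := fun a : Fin k => (n : ℝ) * ‖A a‖)
          (fun a _ => by positivity) (Finset.mem_univ a)

lemma all_mem_VV [Nonempty (Fin k)] (hLCP : IsLCP A) : ∀ x, x ∈ VV A := by
  classical
  by_contra hcon
  push_neg at hcon
  obtain ⟨x₀, hx₀⟩ := hcon
  obtain ⟨nA, hnA0, hnA⟩ := exists_nA A
  obtain ⟨CV, hCV1, hCV⟩ := VV_unif A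
  have hCV0 : (0:ℝ) ≤ CV := le_trans zero_le_one hCV1
  -- one blowup step
  have stepEx : ∀ (p : {y : Fin n → ℝ // y ∉ VV A}) (s : ℕ),
      ∃ w : List (Fin k), w ≠ [] ∧ max ((s:ℝ)+1) (‖p.1‖+1) ≤ ‖Lp A w *ᵥ p.1‖ ∧
        Lp A w *ᵥ p.1 ∉ VV A := by
    intro p s
    exact exists_blowup A hnA0 hnA hCV0 hCV p.2
      (lt_of_lt_of_le (lt_add_one _) (le_max_right _ _))
  choose wf hw1 hw2 hw3 using stepEx
  let T : ℕ → {y : Fin n → ℝ // y ∉ VV A} := fun s =>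
    Nat.rec ⟨x₀, hx₀⟩ (fun s p => ⟨Lp A (wf p s) *ᵥ p.1, hw3 p s⟩) s
  have hTsucc : ∀ s, (T (s+1)).1 = Lp A (wf (T s) s) *ᵥ (T s).1 := fun s => rfl
  set ws : ℕ → List (Fin k) := fun s => wf (T s) s with hws
  have hwsne : ∀ s, ws s ≠ [] := fun s => hw1 (T s) s
  have hTn : ∀ s : ℕ, ((s:ℝ)+1) ≤ ‖(T (s+1)).1‖ := by
    intro s
    have := hw2 (T s) s
    rw [← hTsucc s] at this
    exact (le_max_left _ _).trans this
  -- the concatenated sequence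
  set σ := cseq ws with hσ
  have hkey : ∀ t, Lp A (wd σ (cum ws t)) *ᵥ x₀ = (T t).1 := by
    intro t
    induction t with
    | zero =>
        show Lp A (wd σ 0) *ᵥ x₀ = x₀
        rw [wd_zero, Lp_nil, Matrix.one_mulVec]
    | succ t ih =>
        rw [hσ, wd_cseq ws hwsne (t+1)]
        show Lp A (pl ws t ++ ws t) *ᵥ x₀ = (T (t+1)).1
        rw [Lp_append, ← Matrix.mulVec_mulVec]
        rw [hσ, wd_cseq ws hwsne t] at ih
        rw [ih, hTsucc t]
  obtain ⟨L, hL⟩ := hLCP σ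
  have hL' : Tendsto (fun m => Lp A (wd σ m)) atTop (𝓝 L) := by
    have : (fun m => Lp A (wd σ m)) = leftProd A σ := by
      funext m; rw [leftProd_eq]
    rw [this]; exact hL
  have hcum : Tendsto (cum ws) atTop atTop := (cum_strict ws hwsne).tendsto_atTop
  have hsub : Tendsto (fun t => Lp A (wd σ (cum ws t))) atTop (𝓝 L) := hL'.comp hcum
  have hvec : Tendsto (fun t => (T t).1) atTop (𝓝 (L *ᵥ x₀)) := by
    have := tendsto_mulVec hsub x₀
    simpa only [hkey] using this
  have hnorm : Tendsto (fun t => ‖(T t).1‖) atTop (𝓝 ‖L *ᵥ x₀‖) := hvec.norm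
  have hev : (fun t : ℕ => (t:ℝ)) ≤ᶠ[atTop] fun t => ‖(T t).1‖ := by
    filter_upwards [eventually_ge_atTop 1] with t ht
    obtain ⟨s, rfl⟩ : ∃ s, t = s + 1 := ⟨t - 1, by omega⟩
    have := hTn s
    push_cast
    push_cast at this
    linarith
  have hdiv : Tendsto (fun t => ‖(T t).1‖) atTop atTop :=
    tendsto_atTop_mono' atTop hev tendsto_natCast_atTop_atTop
  exact not_tendsto_atTop_of_tendsto_nhds hnorm hdiv

/-- Product boundedness. -/
lemma productBound [Nonempty (Fin k)] (hLCP : IsLCP A) :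
    ∃ C : ℝ, 1 ≤ C ∧ ∀ (w : List (Fin k)) (x : Fin n → ℝ), ‖Lp A w *ᵥ x‖ ≤ C * ‖x‖ := by
  obtain ⟨C, hC1, hC⟩ := VV_unif A
  exact ⟨C, hC1, fun w x => hC x (all_mem_VV A hLCP x) w⟩

end DLaux

namespace DLaux

variable {n k : ℕ} (A : Fin k → Matrix (Fin n) (Fin n) ℝ)

lemma lim_zero_of_io (hLCP : IsLCP A)
    (hK : ∀ x : Fin n → ℝ, (∀ a, A a *ᵥ x = x) → x = 0)
    (σ : ℕ → Fin k) (hio : ∀ (a : Fin k) (N : ℕ), ∃ m, N ≤ m ∧ σ m = a) :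
    Tendsto (fun m => Lp A (wd σ m)) atTop (𝓝 0) := by
  obtain ⟨L, hL⟩ := hLCP σ
  have hL' : Tendsto (fun m => Lp A (wd σ m)) atTop (𝓝 L) := by
    have : (fun m => Lp A (wd σ m)) = leftProd A σ := by
      funext m; rw [leftProd_eq]
    rw [this]; exact hL
  suffices hL0 : L = 0 by rwa [hL0] at hL'
  -- fixed by every A a
  have hfix : ∀ a : Fin k, A a * L = L := by
    intro a
    choose occ hocc1 hocc2 using hio a
    have hoccT : Tendsto occ atTop atTop :=
      tendsto_atTop_mono hocc1 tendsto_id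
    have h1 : Tendsto (fun N => Lp A (wd σ (occ N))) atTop (𝓝 L) := hL'.comp hoccT
    have hoccT1 : Tendsto (fun N => occ N + 1) atTop atTop :=
      tendsto_atTop_mono (fun N => Nat.le_succ_of_le (hocc1 N)) tendsto_id |>.comp tendsto_id
        |>.congr (fun _ => rfl)
    have h2 : Tendsto (fun N => Lp A (wd σ (occ N + 1))) atTop (𝓝 L) :=
      hL'.comp hoccT1
    have h3 : (fun N => Lp A (wd σ (occ N + 1))) = fun N => A a * Lp A (wd σ (occ N)) := by
      funext N
      rw [wd_succ, Lp_snoc, hocc2 N]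
    rw [h3] at h2
    have h4 : Tendsto (fun N => A a * Lp A (wd σ (occ N))) atTop (𝓝 (A a * L)) :=
      tendsto_matmul tendsto_const_nhds h1
    exact tendsto_nhds_unique h4 h2
  -- conclude L = 0
  have hvec : ∀ x, L *ᵥ x = 0 := by
    intro x
    apply hK
    intro a
    rw [Matrix.mulVec_mulVec, hfix a]
  ext i l
  have := congrFun (hvec (Pi.single l 1)) i
  rw [Matrix.mulVec_single] at this
  simpa using this

end DLaux

namespace DLaux

variable {n k : ℕ} (A : Fin k → Matrix (Fin n) (Fin n) ℝ)

def rep (w : List (Fin k)) : ℕ → List (Fin k)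
  | 0 => []
  | s + 1 => w ++ rep w s

lemma RP_rep (w : List (Fin k)) : ∀ s, RP A (rep w s) = RP A w ^ s
  | 0 => by simp [rep, RP, Lp_nil]
  | s + 1 => by
      show RP A (w ++ rep w s) = _
      rw [RP_append, RP_rep w s, pow_succ']

lemma sum_mulVec' {ι : Type*} (s : Finset ι) (f : ι → Matrix (Fin n) (Fin n) ℝ)
    (x : Fin n → ℝ) : (∑ i ∈ s, f i) *ᵥ x = ∑ i ∈ s, f i *ᵥ x := by
  classical
  induction s using Finset.induction_on with
  | empty => simp [Matrix.zero_mulVec]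
  | insert _ _ hnot ih =>
      rw [Finset.sum_insert hnot, Finset.sum_insert hnot, Matrix.add_mulVec, ih]

lemma geom_half_sum (η : ℝ) (hη : 0 ≤ η) (t : ℕ) :
    ∑ r ∈ Finset.range t, η * (1/2 : ℝ)^(r+1) ≤ η := by
  have hEq : ∀ t : ℕ, ∑ r ∈ Finset.range t, η * (1/2 : ℝ)^(r+1) = η * (1 - (1/2)^t) := by
    intro t
    induction t with
    | zero => simp
    | succ t ih => rw [Finset.sum_range_succ, ih, pow_succ]; ring
  rw [hEq]
  nlinarith [pow_nonneg (by norm_num : (0:ℝ) ≤ 1/2) t]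

lemma key_small [Nonempty (Fin k)] (hLCP : IsLCP A)
    (hK : ∀ x : Fin n → ℝ, (∀ a, A a *ᵥ x = x) → x = 0)
    (j : ℕ → Fin k)
    {C : ℝ} (hC1 : 1 ≤ C)
    (hCb : ∀ (w : List (Fin k)) (x : Fin n → ℝ), ‖Lp A w *ᵥ x‖ ≤ C * ‖x‖)
    (e : ℕ → ℕ) (hemono : StrictMono e)
    (hwin : ∀ s a, ∃ m, e s ≤ m ∧ m < e (s + 1) ∧ j m = a) :
    ∀ δ > (0:ℝ), ∃ s, ‖rightProd A j (e s)‖ < δ := by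
  classical
  intro δ hδ
  by_contra hcon
  push_neg at hcon
  have hC0 : (0:ℝ) ≤ C := zero_le_one.trans hC1
  -- vector and norm bounds for all right products
  have hRPvec : ∀ (σ : ℕ → Fin k) (m : ℕ) (x : Fin n → ℝ),
      ‖rightProd A σ m *ᵥ x‖ ≤ C * ‖x‖ := by
    intro σ m x
    rw [rightProd_eq]
    exact hCb _ x
  have hRPnorm : ∀ (σ : ℕ → Fin k) (m : ℕ), ‖rightProd A σ m‖ ≤ C := fun σ m =>
    norm_le_of_vecbound hC0 (hRPvec σ m)
  -- cluster point of the epoch products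
  set ρ : ℕ → Matrix (Fin n) (Fin n) ℝ := fun s => rightProd A j (e s) with hρ
  have hρball : ∀ s, ρ s ∈ Metric.closedBall (0 : Matrix (Fin n) (Fin n) ℝ) C := by
    intro s
    rw [mem_closedBall_zero_iff]
    exact hRPnorm j (e s)
  obtain ⟨W, -, φ₁, hφ₁, hWlim⟩ :=
    tendsto_subseq_of_bounded Metric.isBounded_closedBall hρball
  -- the gap products
  set G : ℕ → Matrix (Fin n) (Fin n) ℝ := fun i =>
    rightProd A (fun q => j (e (φ₁ i) + q)) (e (φ₁ (i+1)) - e (φ₁ i)) with hG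
  have hGsplit : ∀ i, ρ (φ₁ (i+1)) = ρ (φ₁ i) * G i := by
    intro i
    have hle : e (φ₁ i) ≤ e (φ₁ (i+1)) :=
      (hemono.monotone (le_of_lt (hφ₁ (lt_add_one i))))
    have := rightProd_split A j (e (φ₁ i)) (e (φ₁ (i+1)) - e (φ₁ i))
    rw [Nat.add_sub_cancel' hle] at this
    exact this
  have hGball : ∀ i, G i ∈ Metric.closedBall (0 : Matrix (Fin n) (Fin n) ℝ) C := by
    intro i
    rw [mem_closedBall_zero_iff]
    exact hRPnorm _ _
  obtain ⟨M, -, φ₂, hφ₂, hMlim⟩ :=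
    tendsto_subseq_of_bounded Metric.isBounded_closedBall hGball
  -- W = W * M
  have hW1 : Tendsto (fun i => ρ (φ₁ (φ₂ i))) atTop (𝓝 W) := hWlim.comp hφ₂.tendsto_atTop
  have hφ₂1 : Tendsto (fun i => φ₂ i + 1) atTop atTop :=
    tendsto_atTop_mono (fun i => Nat.le_succ_of_le hφ₂.le_apply) tendsto_id
  have hW2 : Tendsto (fun i => ρ (φ₁ (φ₂ i + 1))) atTop (𝓝 W) := hWlim.comp hφ₂1
  have hWM : W = W * M := by
    have h4 : Tendsto (fun i => ρ (φ₁ (φ₂ i)) * G (φ₂ i)) atTop (𝓝 (W * M)) :=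
      tendsto_matmul hW1 hMlim
    have h5 : (fun i => ρ (φ₁ (φ₂ i + 1))) = fun i => ρ (φ₁ (φ₂ i)) * G (φ₂ i) := by
      funext i; exact hGsplit (φ₂ i)
    rw [h5] at hW2
    exact tendsto_nhds_unique hW2 h4
  have hWMt : ∀ t, W = W * M ^ t := by
    intro t
    induction t with
    | zero => simp
    | succ t ih =>
        rw [pow_succ, ← mul_assoc, ← ih]
        exact hWM
  -- vector bounds for W and M and its powers
  have hWvec : ∀ x, ‖W *ᵥ x‖ ≤ C * ‖x‖ :=
    vecbound_of_tendsto hWlim (fun i x => hRPvec j (e (φ₁ i)) x)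
  -- gap words
  set gw : ℕ → List (Fin k) := fun i =>
    wd (fun q => j (e (φ₁ i) + q)) (e (φ₁ (i+1)) - e (φ₁ i)) with hgw
  have hGgw : ∀ i, G i = RP A (gw i) := fun i => rightProd_eq A _ _
  have hgwall : ∀ i (a : Fin k), a ∈ gw i := by
    intro i a
    obtain ⟨m, hm1, hm2, hm3⟩ := hwin (φ₁ i) a
    have hm2' : m < e (φ₁ (i+1)) :=
      lt_of_lt_of_le hm2 (hemono.monotone (Nat.succ_le_of_lt (hφ₁ (lt_add_one i))))
    rw [hgw]
    unfold wd
    rw [List.mem_ofFn]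
    refine ⟨⟨m - e (φ₁ i), by omega⟩, ?_⟩
    show j (e (φ₁ i) + (m - e (φ₁ i))) = a
    rw [Nat.add_sub_cancel' hm1]
    exact hm3
  have hMpvec : ∀ (s : ℕ) (x : Fin n → ℝ), ‖(M ^ s) *ᵥ x‖ ≤ C * ‖x‖ := by
    intro s
    have hps : Tendsto (fun i => G (φ₂ i) ^ s) atTop (𝓝 (M ^ s)) := tendsto_matpow hMlim s
    apply vecbound_of_tendsto hps
    intro i x
    rw [hGgw, ← RP_rep, RP]
    exact hCb _ x
  -- smallness of powers of M
  have hMt_small : ∀ δ' > (0:ℝ), ∃ t, ∀ x, ‖(M ^ t) *ᵥ x‖ ≤ δ' * ‖x‖ := by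
    intro δ' hδ'
    set η : ℝ := δ' / (2 * ((n:ℝ) * C^2 + 1)) with hηdef
    have hη : 0 < η := by positivity
    have hch : ∀ t : ℕ, ∃ i, ‖G (φ₂ i) - M‖ ≤ η * (1/2)^(t+1) := by
      intro t
      have hpos : (0:ℝ) < η * (1/2)^(t+1) := by positivity
      obtain ⟨N, hN⟩ := (Metric.tendsto_atTop.mp hMlim _ hpos)
      refine ⟨N, ?_⟩
      have := hN N le_rfl
      rw [dist_eq_norm] at this
      exact this.le
    choose ix hix using hch
    set v : ℕ → List (Fin k) := fun t => gw (φ₂ (ix t)) with hv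
    have hΓ : ∀ t, RP A (v t) = G (φ₂ (ix t)) := fun t => (hGgw _).symm
    have hvall : ∀ t (a : Fin k), a ∈ v t := fun t a => hgwall _ a
    have hvΓ : ∀ t : ℕ, ‖RP A (v t) - M‖ ≤ η * (1/2)^(t+1) := by
      intro t; rw [hΓ]; exact hix t
    set u : ℕ → List (Fin k) := fun t => (v t).reverse with hu
    have hune : ∀ t, u t ≠ [] := by
      intro t
      rw [hu]
      simp only [ne_eq, List.reverse_eq_nil_iff]
      exact List.ne_nil_of_mem (hvall t (Classical.arbitrary _))
    have hual : ∀ t (a : Fin k), a ∈ u t := by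
      intro t a; rw [hu]; simpa using hvall t a
    set σ : ℕ → Fin k := cseq u with hσ
    set T : ℕ → Matrix (Fin n) (Fin n) ℝ := fun t => Lp A (pl u t) with hT
    have hTsucc : ∀ t, T (t+1) = RP A (v t) * T t := by
      intro t
      rw [hT]
      show Lp A (pl u t ++ u t) = _
      rw [Lp_append]
      rfl
    have hTvec : ∀ (t : ℕ) (x : Fin n → ℝ), ‖T t *ᵥ x‖ ≤ C * ‖x‖ := fun t x => hCb _ x
    -- telescope identity
    have htel : ∀ t, T t - M ^ t =
        ∑ r ∈ Finset.range t, M ^ (t - 1 - r) * ((RP A (v r) - M) * T r) := by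
      intro t
      induction t with
      | zero => simp [hT, pl, Lp_nil]
      | succ t ih =>
          have hstep : T (t+1) - M^(t+1) =
              (RP A (v t) - M) * T t + M * (T t - M^t) := by
            rw [hTsucc, pow_succ']
            noncomm_ring
          rw [hstep, ih, Finset.mul_sum, Finset.sum_range_succ]
          have h1 : (t+1) - 1 - t = 0 := by omega
          rw [h1, pow_zero, one_mul, add_comm]
          congr 1
          apply Finset.sum_congr rfl
          intro r hr
          rw [Finset.mem_range] at hr
          rw [← mul_assoc, ← pow_succ']
          have h2 : t - 1 - r + 1 = t + 1 - 1 - r := by omega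
          rw [h2]
    -- vector bound on the difference
    have hdiff : ∀ (t : ℕ) (x : Fin n → ℝ),
        ‖(T t - M ^ t) *ᵥ x‖ ≤ C * C * (n:ℝ) * η * ‖x‖ := by
      intro t x
      rw [htel t, sum_mulVec']
      calc ‖∑ r ∈ Finset.range t, (M ^ (t-1-r) * ((RP A (v r) - M) * T r)) *ᵥ x‖
          ≤ ∑ r ∈ Finset.range t, ‖(M ^ (t-1-r) * ((RP A (v r) - M) * T r)) *ᵥ x‖ :=
            norm_sum_le _ _
        _ ≤ ∑ r ∈ Finset.range t, C * ((n:ℝ) * (η * (1/2)^(r+1)) * (C * ‖x‖)) := by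
            apply Finset.sum_le_sum
            intro r _
            rw [← Matrix.mulVec_mulVec, ← Matrix.mulVec_mulVec]
            calc ‖M ^ (t-1-r) *ᵥ ((RP A (v r) - M) *ᵥ (T r *ᵥ x))‖
                ≤ C * ‖(RP A (v r) - M) *ᵥ (T r *ᵥ x)‖ := hMpvec _ _
              _ ≤ C * ((n:ℝ) * ‖RP A (v r) - M‖ * ‖T r *ᵥ x‖) :=
                  mul_le_mul_of_nonneg_left (mulVec_norm_le _ _) hC0
              _ ≤ C * ((n:ℝ) * (η * (1/2)^(r+1)) * (C * ‖x‖)) := by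
                  apply mul_le_mul_of_nonneg_left _ hC0
                  apply mul_le_mul
                  · exact mul_le_mul_of_nonneg_left (hvΓ r) (by positivity)
                  · exact hTvec r x
                  · exact norm_nonneg _
                  · positivity
        _ = C * (n:ℝ) * (C * ‖x‖) * (∑ r ∈ Finset.range t, η * (1/2)^(r+1)) := by
            rw [Finset.mul_sum]
            apply Finset.sum_congr rfl
            intro r _
            ring
        _ ≤ C * (n:ℝ) * (C * ‖x‖) * η := by
            apply mul_le_mul_of_nonneg_left (geom_half_sum η hη.le t) (by positivity)
        _ = C * C * (n:ℝ) * η * ‖x‖ := by ring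
    -- T tends to zero
    have hσio : ∀ (a : Fin k) (N : ℕ), ∃ m, N ≤ m ∧ σ m = a := cseq_io u hune hual
    have hTz : Tendsto T atTop (𝓝 0) := by
      have h0 := lim_zero_of_io A hLCP hK σ hσio
      have hcum : Tendsto (cum u) atTop atTop := (cum_strict u hune).tendsto_atTop
      have h1 := h0.comp hcum
      have heq : ((fun m => Lp A (wd σ m)) ∘ cum u) = T := by
        funext t
        show Lp A (wd σ (cum u t)) = T t
        rw [hσ, wd_cseq u hune t, hT]
      rwa [heq] at h1
    obtain ⟨N, hN⟩ := Metric.tendsto_atTop.mp hTz (δ' / (2 * ((n:ℝ)+1))) (by positivity)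
    refine ⟨N, fun x => ?_⟩
    have hTN : ‖T N‖ < δ' / (2 * ((n:ℝ)+1)) := by
      have := hN N le_rfl
      rwa [dist_zero_right] at this
    have h1 : ‖(M ^ N) *ᵥ x‖ ≤ ‖T N *ᵥ x‖ + ‖(T N - M ^ N) *ᵥ x‖ := by
      have heq2 : (M ^ N) *ᵥ x = T N *ᵥ x - (T N - M ^ N) *ᵥ x := by
        rw [Matrix.sub_mulVec]
        abel
      rw [heq2]
      exact norm_sub_le _ _
    have h2 : ‖T N *ᵥ x‖ ≤ (n:ℝ) * ‖T N‖ * ‖x‖ := mulVec_norm_le _ _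
    have h3 : ‖(T N - M ^ N) *ᵥ x‖ ≤ C * C * (n:ℝ) * η * ‖x‖ := hdiff N x
    have h4 : (n:ℝ) * ‖T N‖ ≤ δ' / 2 := by
      have hpos : (0:ℝ) < 2*((n:ℝ)+1) := by positivity
      calc (n:ℝ) * ‖T N‖ ≤ (n:ℝ) * (δ' / (2*((n:ℝ)+1))) :=
            mul_le_mul_of_nonneg_left hTN.le (by positivity)
        _ ≤ δ' / 2 := by
            rw [← mul_div_assoc, div_le_div_iff₀ hpos (by norm_num : (0:ℝ) < 2)]
            nlinarith [hδ'.le]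
    have h5 : C * C * (n:ℝ) * η ≤ δ' / 2 := by
      have hpos2 : (0:ℝ) < 2*((n:ℝ)*C^2+1) := by positivity
      rw [hηdef, ← mul_div_assoc, div_le_div_iff₀ hpos2 (by norm_num : (0:ℝ) < 2)]
      nlinarith [hδ'.le, sq_nonneg C]
    nlinarith [norm_nonneg x, norm_nonneg (T N *ᵥ x), h1, h2, h3, h4, h5,
      mul_le_mul_of_nonneg_right h4 (norm_nonneg x),
      mul_le_mul_of_nonneg_right h5 (norm_nonneg x)]
  -- W = 0
  have hCpos : (0:ℝ) < C := lt_of_lt_of_le one_pos hC1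
  have hWx : ∀ x, W *ᵥ x = 0 := by
    intro x
    have hb : ∀ ε' > (0:ℝ), ‖W *ᵥ x‖ ≤ ε' := by
      intro ε' hε'
      have hpos : (0:ℝ) < C * (‖x‖ + 1) := by positivity
      set δ' : ℝ := ε' / (C * (‖x‖ + 1)) with hδ'def
      have hδ'pos : 0 < δ' := div_pos hε' hpos
      obtain ⟨t, ht⟩ := hMt_small δ' hδ'pos
      calc ‖W *ᵥ x‖ = ‖(W * M ^ t) *ᵥ x‖ := by rw [← hWMt t]
        _ = ‖W *ᵥ (M ^ t *ᵥ x)‖ := by rw [← Matrix.mulVec_mulVec]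
        _ ≤ C * ‖M ^ t *ᵥ x‖ := hWvec _
        _ ≤ C * (δ' * ‖x‖) := mul_le_mul_of_nonneg_left (ht x) hC0
        _ ≤ ε' := by
            rw [hδ'def]
            have heq3 : C * (ε' / (C * (‖x‖ + 1)) * ‖x‖)
                = ε' * ((C * ‖x‖) / (C * (‖x‖+1))) := by ring
            rw [heq3]
            have hle : (C * ‖x‖) / (C * (‖x‖+1)) ≤ 1 := by
              apply div_le_one_of_le₀
              · nlinarith [norm_nonneg x]
              · positivity
            nlinarith [hε'.le]
    have h0 : ‖W *ᵥ x‖ ≤ 0 := by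
      apply le_of_forall_pos_le_add
      intro ε hε
      rw [zero_add]
      exact hb ε hε
    exact norm_le_zero_iff.mp h0
  have hW0 : W = 0 := by
    ext i l
    have hent := congrFun (hWx (Pi.single l 1)) i
    rw [Matrix.mulVec_single] at hent
    simpa using hent
  have hge : δ ≤ ‖W‖ := by
    have hnormlim : Tendsto (fun i => ‖(ρ ∘ φ₁) i‖) atTop (𝓝 ‖W‖) := hWlim.norm
    exact ge_of_tendsto hnormlim (Eventually.of_forall fun i => hcon (φ₁ i))
  rw [hW0, norm_zero] at hge
  exact absurd hge (not_le.mpr hδ)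

end DLaux

theorem rightProd_tendsto_zero' {n k : ℕ}
    (A : Fin k → Matrix (Fin n) (Fin n) ℝ) (hLCP : IsLCP A)
    (hker : (⨅ j : Fin k, LinearMap.ker (Matrix.mulVecLin (1 - A j))) = ⊥)
    (j : ℕ → Fin k) (hinf : ∀ a : Fin k, ∀ N : ℕ, ∃ m, N ≤ m ∧ j m = a) :
    Tendsto (rightProd A j) atTop (𝓝 (0 : Matrix (Fin n) (Fin n) ℝ)) := by
  haveI : Nonempty (Fin k) := ⟨j 0⟩
  have hK : ∀ x : Fin n → ℝ, (∀ a, A a *ᵥ x = x) → x = 0 := by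
    intro x hx
    have hmem : x ∈ (⨅ a : Fin k, LinearMap.ker (Matrix.mulVecLin (1 - A a))) := by
      rw [Submodule.mem_iInf]
      intro a
      rw [LinearMap.mem_ker, Matrix.mulVecLin_apply, Matrix.sub_mulVec,
        Matrix.one_mulVec, hx a, sub_self]
    rw [hker] at hmem
    exact Submodule.mem_bot ℝ |>.mp hmem
  obtain ⟨C, hC1, hCb⟩ := DLaux.productBound A hLCP
  have hC0 : (0:ℝ) ≤ C := zero_le_one.trans hC1
  -- epochs
  choose occ hocc1 hocc2 using hinf
  set nxt : ℕ → ℕ := fun N => (Finset.univ.sup fun a : Fin k => occ a N) + 1 with hnxt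
  have hnxtlt : ∀ N, N < nxt N := by
    intro N
    have h1 := hocc1 (Classical.arbitrary (Fin k)) N
    have h2 : occ (Classical.arbitrary (Fin k)) N ≤ Finset.univ.sup fun a : Fin k => occ a N :=
      Finset.le_sup (f := fun a : Fin k => occ a N) (Finset.mem_univ _)
    rw [hnxt]
    show N < (Finset.univ.sup fun a : Fin k => occ a N) + 1
    omega
  set e : ℕ → ℕ := fun s => Nat.rec 0 (fun _ p => nxt p) s with he
  have hesucc : ∀ s, e (s+1) = nxt (e s) := fun s => rfl
  have hemono : StrictMono e := strictMono_nat_of_lt_succ (fun s => by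
    rw [hesucc]; exact hnxtlt _)
  have hwin : ∀ s a, ∃ m, e s ≤ m ∧ m < e (s+1) ∧ j m = a := by
    intro s a
    refine ⟨occ a (e s), hocc1 a (e s), ?_, hocc2 a (e s)⟩
    rw [hesucc, hnxt]
    have : occ a (e s) ≤ Finset.univ.sup fun a : Fin k => occ a (e s) :=
      Finset.le_sup (f := fun a : Fin k => occ a (e s)) (Finset.mem_univ _)
    show occ a (e s) < (Finset.univ.sup fun a : Fin k => occ a (e s)) + 1
    omega
  have key := DLaux.key_small A hLCP hK j hC1 hCb e hemono hwin
  refine Metric.tendsto_atTop.mpr ?_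
  intro ε hε
  have hden : (0:ℝ) < (n:ℝ) * C + 1 := by positivity
  obtain ⟨s, hs⟩ := key (ε / ((n:ℝ) * C + 1)) (by positivity)
  refine ⟨e s, fun m hm => ?_⟩
  rw [dist_zero_right]
  have hdec := DLaux.rightProd_split A j (e s) (m - e s)
  rw [Nat.add_sub_cancel' hm] at hdec
  have hvec : ∀ x, ‖rightProd A j m *ᵥ x‖
      ≤ ((n:ℝ) * ‖rightProd A j (e s)‖ * C) * ‖x‖ := by
    intro x
    rw [hdec, ← Matrix.mulVec_mulVec]
    calc ‖rightProd A j (e s) *ᵥ (rightProd A (fun q => j (e s + q)) (m - e s) *ᵥ x)‖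
        ≤ (n:ℝ) * ‖rightProd A j (e s)‖ *
            ‖rightProd A (fun q => j (e s + q)) (m - e s) *ᵥ x‖ :=
          DLaux.mulVec_norm_le _ _
      _ ≤ (n:ℝ) * ‖rightProd A j (e s)‖ * (C * ‖x‖) := by
          apply mul_le_mul_of_nonneg_left _ (by positivity)
          rw [DLaux.rightProd_eq]
          exact hCb _ x
      _ = ((n:ℝ) * ‖rightProd A j (e s)‖ * C) * ‖x‖ := by ring
  have hnorm : ‖rightProd A j m‖ ≤ (n:ℝ) * ‖rightProd A j (e s)‖ * C :=
    DLaux.norm_le_of_vecbound (by positivity) hvec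
  have h1 : ‖rightProd A j (e s)‖ * ((n:ℝ)*C+1) < ε := (lt_div_iff₀ hden).mp hs
  nlinarith [norm_nonneg (rightProd A j (e s)), hnorm, h1, hC0, Nat.cast_nonneg (α := ℝ) n]


/-- if Σ is LCP, `∩_j ker (I - A_j) = {0}`, and each index of `J`
occurs infinitely often in the sequence `(j_i)`, then the right products
`A_{j_1} ⋯ A_{j_m}` tend to the zero matrix. -/
theorem rightProd_tendsto_zero {n k : ℕ}
    (A : Fin k → Matrix (Fin n) (Fin n) ℝ) (hLCP : IsLCP A)
    (hker : (⨅ j : Fin k, LinearMap.ker (Matrix.mulVecLin (1 - A j))) = ⊥)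
    (j : ℕ → Fin k) (hinf : ∀ a : Fin k, ∀ N : ℕ, ∃ m, N ≤ m ∧ j m = a) :
    Tendsto (rightProd A j) atTop (𝓝 (0 : Matrix (Fin n) (Fin n) ℝ)) :=
  rightProd_tendsto_zero' A hLCP hker j hinf
end

section
/- Let Σ = {A_j : j ∈ J} be a finite set of real n×n matrices that is LCP and RCP. If every matrix A ∈ Σ has spectral radius strictly less than 1 (i.e., every complex eigenvalue of A has modulus < 1), then for every sequence (j_i)_{i≥1} in J the left products A_{j_m} ··· A_{j_1} converge to the zero matrix as m → ∞. -/
open Filter Topology Matrix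

attribute [local instance] Matrix.normedAddCommGroup

/-- if Σ is LCP and RCP and every matrix of Σ has all its complex
eigenvalues of modulus `< 1`, then every left product converges to the zero
matrix. -/
theorem leftProd_tendsto_zero_of_spectral_radius_lt_one {n k : ℕ}
    (A : Fin k → Matrix (Fin n) (Fin n) ℝ) (hLCP : IsLCP A) (hRCP : IsRCP A)
    (hspec : ∀ (a : Fin k) (μ : ℂ),
      μ ∈ spectrum ℂ ((A a).map (algebraMap ℝ ℂ)) → ‖μ‖ < 1) :
    ∀ j : ℕ → Fin k,
      Tendsto (leftProd A j) atTop (𝓝 (0 : Matrix (Fin n) (Fin n) ℝ)) := by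
  intro j
  obtain ⟨L, hL⟩ := hLCP j
  -- pigeonhole: some index a is hit infinitely often
  obtain ⟨a, ha⟩ := Finite.exists_infinite_fiber j
  have hS : {m | j m = a}.Infinite := by
    rw [← Set.infinite_coe_iff]; exact ha
  set φ : ℕ → ℕ := Nat.nth (fun m => j m = a) with hphi
  have hmono : StrictMono φ := Nat.nth_strictMono hS
  have hmem : ∀ i, j (φ i) = a := fun i => Nat.nth_mem_of_infinite hS i
  have h1 : Tendsto (fun i => leftProd A j (φ i)) atTop (𝓝 L) :=
    hL.comp hmono.tendsto_atTop
  have h2 : Tendsto (fun i => leftProd A j (φ i + 1)) atTop (𝓝 L) :=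
    hL.comp (tendsto_atTop_mono (fun i => le_of_lt (Nat.lt_succ_of_le (le_refl _)))
      hmono.tendsto_atTop)
  have h3 : Tendsto (fun i => leftProd A j (φ i + 1)) atTop (𝓝 (A a * L)) := by
    have : (fun i => leftProd A j (φ i + 1)) = fun i => A a * leftProd A j (φ i) := by
      funext i; simp [leftProd, hmem i]
    rw [this]
    exact ((continuous_const.matrix_mul continuous_id).tendsto L).comp h1
  have hfix : L = A a * L := tendsto_nhds_unique h2 h3
  -- `1 - A a` is invertible since `1` is not an eigenvalue of `A a`
  have hdet : (1 - A a).det ≠ 0 := by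
    intro h0
    have h1spec : (1 : ℂ) ∈ spectrum ℂ ((A a).map (algebraMap ℝ ℂ)) := by
      rw [spectrum.mem_iff]
      intro hu
      rw [Matrix.isUnit_iff_isUnit_det] at hu
      have : (algebraMap ℂ (Matrix (Fin n) (Fin n) ℂ) 1 - (A a).map (algebraMap ℝ ℂ)) =
          (1 - A a).map (algebraMap ℝ ℂ) := by
        simp [Matrix.map_sub, Matrix.map_one _ (map_zero _) (map_one _)]
      rw [this, ← RingHom.mapMatrix_apply, ← RingHom.map_det, h0, map_zero] at hu
      exact hu.ne_zero rfl
    have := hspec a 1 h1spec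
    simp at this
  have hunit : IsUnit (1 - A a).det := isUnit_iff_ne_zero.mpr hdet
  have hL0 : L = 0 := by
    have hz : (1 - A a) * L = 0 := by
      rw [sub_mul, one_mul, ← hfix, sub_self]
    calc L = (1 - A a)⁻¹ * ((1 - A a) * L) := by
            rw [← Matrix.mul_assoc, Matrix.nonsing_inv_mul _ hunit, Matrix.one_mul]
      _ = 0 := by rw [hz, Matrix.mul_zero]
  rwa [hL0] at hL
end

section
/- Let Σ = {A_j : j ∈ J} be a finite set of real n×n matrices. If Σ is LCP then Σ is product bounded: there exists a constant C > 0 such that every finite product A_{j_1} A_{j_2} ··· A_{j_m} of matrices from Σ (including the empty product, the identity) has matrix norm less than C. -/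
open Filter Topology Matrix

attribute [local instance] Matrix.normedAddCommGroup

namespace LCPaux

variable {n k : ℕ} (A : Fin k → Matrix (Fin n) (Fin n) ℝ)

/-- Word products. -/
noncomputable def P (l : List (Fin k)) : Matrix (Fin n) (Fin n) ℝ := (l.map A).prod

lemma P_nil : P A ([] : List (Fin k)) = 1 := rfl

lemma P_cons (b : Fin k) (l : List (Fin k)) : P A (b :: l) = A b * P A l := by
  simp [P]

lemma P_append (u v : List (Fin k)) : P A (u ++ v) = P A u * P A v := by
  simp [P]

lemma mulVec_norm_le (M : Matrix (Fin n) (Fin n) ℝ) (x : Fin n → ℝ) :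
    ‖M *ᵥ x‖ ≤ (n : ℝ) * ‖M‖ * ‖x‖ := by
  have hnn : (0:ℝ) ≤ (n : ℝ) * ‖M‖ * ‖x‖ := by positivity
  rw [pi_norm_le_iff_of_nonneg hnn]
  intro i
  calc ‖(M *ᵥ x) i‖ = ‖∑ q, M i q * x q‖ := rfl
    _ ≤ ∑ q, ‖M i q * x q‖ := norm_sum_le _ _
    _ ≤ ∑ _q : Fin n, ‖M‖ * ‖x‖ := by
        refine Finset.sum_le_sum fun q _ => ?_
        rw [norm_mul]
        exact mul_le_mul (Matrix.norm_entry_le_entrywise_sup_norm M)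
          (norm_le_pi_norm x q) (norm_nonneg _) (norm_nonneg _)
    _ = (n : ℝ) * ‖M‖ * ‖x‖ := by
        simp [Finset.sum_const, mul_assoc]

/-- The subspace of vectors with bounded orbit under all word products. -/
noncomputable def V : Submodule ℝ (Fin n → ℝ) where
  carrier := {x | ∃ B : ℝ, ∀ l : List (Fin k), ‖P A l *ᵥ x‖ ≤ B}
  zero_mem' := ⟨0, fun l => by simp [Matrix.mulVec_zero]⟩
  add_mem' := by
    rintro x y ⟨Bx, hBx⟩ ⟨By, hBy⟩
    exact ⟨Bx + By, fun l => by
      rw [Matrix.mulVec_add]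
      exact (norm_add_le _ _).trans (add_le_add (hBx l) (hBy l))⟩
  smul_mem' := by
    rintro c x ⟨B, hB⟩
    exact ⟨‖c‖ * B, fun l => by
      rw [Matrix.mulVec_smul, norm_smul]
      exact mul_le_mul_of_nonneg_left (hB l) (norm_nonneg c)⟩

/-- Uniform linear bound on `V`. -/
lemma lemA : ∃ CB : ℝ, 0 ≤ CB ∧
    ∀ y ∈ V A, ∀ l : List (Fin k), ‖P A l *ᵥ y‖ ≤ CB * ‖y‖ := by
  classical
  set d := Module.finrank ℝ (V A)
  let b : Module.Basis (Fin d) ℝ (V A) := Module.finBasis ℝ (V A)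
  -- bound for each basis vector
  have hb : ∀ i : Fin d, ∃ B : ℝ, 0 ≤ B ∧ ∀ l, ‖P A l *ᵥ (b i : Fin n → ℝ)‖ ≤ B := by
    intro i
    obtain ⟨B, hB⟩ := (b i).2
    exact ⟨max B 0, le_max_right _ _, fun l => (hB l).trans (le_max_left _ _)⟩
  choose B hB0 hB using hb
  -- coordinate map is continuous
  let c : (V A) →L[ℝ] (Fin d → ℝ) :=
    LinearMap.toContinuousLinearMap (b.equivFun : (V A) ≃ₗ[ℝ] (Fin d → ℝ)).toLinearMap
  refine ⟨(∑ i, B i) * ‖c‖, mul_nonneg (Finset.sum_nonneg fun i _ => hB0 i) (c.opNorm_nonneg), ?_⟩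
  intro y hy l
  set yv : V A := ⟨y, hy⟩
  have hrep : (∑ i, b.equivFun yv i • (b i : Fin n → ℝ)) = y := by
    have := b.sum_equivFun yv
    calc (∑ i, b.equivFun yv i • (b i : Fin n → ℝ))
        = ((∑ i, b.equivFun yv i • b i : V A) : Fin n → ℝ) := by
          push_cast [Submodule.coe_sum]
          rfl
      _ = y := by rw [this]
  have hcoord : ∀ i, ‖b.equivFun yv i‖ ≤ ‖c‖ * ‖y‖ := by
    intro i
    have h1 : ‖b.equivFun yv i‖ ≤ ‖c yv‖ := norm_le_pi_norm (c yv) i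
    have h2 : ‖c yv‖ ≤ ‖c‖ * ‖yv‖ := c.le_opNorm yv
    have h3 : ‖yv‖ = ‖y‖ := rfl
    calc ‖b.equivFun yv i‖ ≤ ‖c yv‖ := h1
      _ ≤ ‖c‖ * ‖y‖ := by rw [← h3]; exact h2
  calc ‖P A l *ᵥ y‖ = ‖P A l *ᵥ (∑ i, b.equivFun yv i • (b i : Fin n → ℝ))‖ := by rw [hrep]
    _ = ‖∑ i, b.equivFun yv i • (P A l *ᵥ (b i : Fin n → ℝ))‖ := by
        rw [← Matrix.mulVecLin_apply, map_sum]
        simp [Matrix.mulVecLin_apply]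
    _ ≤ ∑ i, ‖b.equivFun yv i • (P A l *ᵥ (b i : Fin n → ℝ))‖ := norm_sum_le _ _
    _ ≤ ∑ i, (‖c‖ * ‖y‖) * B i := by
        refine Finset.sum_le_sum fun i _ => ?_
        rw [norm_smul]
        exact mul_le_mul (hcoord i) (hB i _) (norm_nonneg _)
          (by positivity)
    _ = (∑ i, B i) * ‖c‖ * ‖y‖ := by
        rw [← Finset.mul_sum]; ring

end LCPaux

namespace LCPaux
variable {n k : ℕ} (A : Fin k → Matrix (Fin n) (Fin n) ℝ)

/-- From any point outside `V` one can reach, by a word product, a point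
outside `V` of arbitrarily large norm. -/
lemma lemB (x : Fin n → ℝ) (hx : x ∉ V A) (R : ℝ) :
    ∃ l : List (Fin k), R ≤ ‖P A l *ᵥ x‖ ∧ P A l *ᵥ x ∉ V A := by
  classical
  by_contra hcon
  push_neg at hcon
  obtain ⟨CB, hCB0, hCB⟩ := lemA A
  set K0 : ℝ := (n : ℝ) * ∑ a, ‖A a‖ with hK0
  have hK0nn : 0 ≤ K0 := by positivity
  have hKa : ∀ a : Fin k, (n : ℝ) * ‖A a‖ ≤ K0 := by
    intro a
    have h : ‖A a‖ ≤ ∑ a', ‖A a'‖ :=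
      Finset.single_le_sum (fun a' _ => norm_nonneg (A a')) (Finset.mem_univ a)
    exact mul_le_mul_of_nonneg_left h (Nat.cast_nonneg n)
  have hdich : ∀ l, ‖P A l *ᵥ x‖ < R ∨ P A l *ᵥ x ∈ V A := by
    intro l
    by_cases h : R ≤ ‖P A l *ᵥ x‖
    · exact Or.inr (hcon l h)
    · exact Or.inl (lt_of_not_ge h)
  have hsuff : ∀ u : List (Fin k), P A u *ᵥ x ∈ V A →
      ∃ s, s <:+ u ∧ P A s *ᵥ x ∈ V A ∧ ‖P A s *ᵥ x‖ ≤ K0 * R := by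
    intro u
    induction u with
    | nil =>
      intro h
      rw [P_nil, Matrix.one_mulVec] at h
      exact absurd h hx
    | cons b t ih =>
      intro h
      by_cases ht : P A t *ᵥ x ∈ V A
      · obtain ⟨s, hs, h1, h2⟩ := ih ht
        exact ⟨s, hs.trans (List.suffix_cons b t), h1, h2⟩
      · have hlt : ‖P A t *ᵥ x‖ < R := (hdich t).resolve_right ht
        refine ⟨b :: t, List.suffix_refl _, h, ?_⟩
        have he : P A (b :: t) *ᵥ x = A b *ᵥ (P A t *ᵥ x) := by
          rw [P_cons, ← Matrix.mulVec_mulVec]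
        rw [he]
        calc ‖A b *ᵥ (P A t *ᵥ x)‖ ≤ (n : ℝ) * ‖A b‖ * ‖P A t *ᵥ x‖ :=
              mulVec_norm_le _ _
          _ ≤ K0 * R := mul_le_mul (hKa b) hlt.le (norm_nonneg _) hK0nn
  apply hx
  refine ⟨max R (CB * (K0 * R)), fun u => ?_⟩
  rcases hdich u with h | h
  · exact h.le.trans (le_max_left _ _)
  · obtain ⟨s, hs, hsV, hsn⟩ := hsuff u h
    obtain ⟨v, rfl⟩ := hs
    rw [P_append, ← Matrix.mulVec_mulVec]
    calc ‖P A v *ᵥ (P A s *ᵥ x)‖ ≤ CB * ‖P A s *ᵥ x‖ := hCB _ hsV v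
      _ ≤ CB * (K0 * R) := mul_le_mul_of_nonneg_left hsn hCB0
      _ ≤ max R (CB * (K0 * R)) := le_max_right _ _

end LCPaux

namespace LCPaux
variable {n k : ℕ} (A : Fin k → Matrix (Fin n) (Fin n) ℝ)

lemma leftProd_eq (j : ℕ → Fin k) (m : ℕ) :
    leftProd A j m = P A (((List.range m).reverse).map j) := by
  induction m with
  | zero => rfl
  | succ m ih =>
    rw [List.range_succ, List.reverse_append]
    simp only [List.reverse_cons, List.reverse_nil, List.nil_append,
      List.singleton_append, List.map_cons]
    rw [P_cons, ← ih]
    rfl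

/-- Every vector has bounded orbit. -/
lemma lemC (hLCP : IsLCP A) (x : Fin n → ℝ) : x ∈ V A := by
  classical
  by_contra hx
  have step : ∀ y : Fin n → ℝ, y ∉ V A → ∀ R : ℝ,
      ∃ l : List (Fin k), l ≠ [] ∧ R ≤ ‖P A l *ᵥ y‖ ∧ P A l *ᵥ y ∉ V A := by
    intro y hy R
    obtain ⟨l, h1, h2⟩ := lemB A y hy (max R (‖y‖ + 1))
    refine ⟨l, ?_, (le_max_left _ _).trans h1, h2⟩
    rintro rfl
    rw [P_nil, Matrix.one_mulVec] at h1
    have := (le_max_right R (‖y‖ + 1)).trans h1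
    linarith
  -- cumulative words
  let next : List (Fin k) → ℕ → List (Fin k) := fun w i =>
    if h : P A w *ᵥ x ∉ V A then Classical.choose (step _ h (i : ℝ)) ++ w else w
  let u : ℕ → List (Fin k) := fun i => Nat.rec [] (fun i w => next w (i + 1)) i
  have hu0 : u 0 = [] := rfl
  have husucc : ∀ i, u (i + 1) = next (u i) (i + 1) := fun i => rfl
  -- invariant
  have inv : ∀ i : ℕ, P A (u i) *ᵥ x ∉ V A ∧ (i : ℝ) ≤ ‖P A (u i) *ᵥ x‖ ∧
      i ≤ (u i).length := by
    intro i
    induction i with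
    | zero =>
      rw [hu0, P_nil, Matrix.one_mulVec]
      exact ⟨hx, by simp [norm_nonneg], Nat.zero_le _⟩
    | succ i ih =>
      obtain ⟨h1, h2, h3⟩ := ih
      rw [husucc i]
      have hnext : next (u i) (i + 1) = Classical.choose (step _ h1 ((i+1 : ℕ) : ℝ)) ++ u i := by
        simp only [next, dif_pos h1]
      rw [hnext]
      obtain ⟨hne, hge, hnotV⟩ := Classical.choose_spec (step _ h1 ((i+1 : ℕ) : ℝ))
      have heq : P A (Classical.choose (step _ h1 ((i+1 : ℕ) : ℝ)) ++ u i) *ᵥ x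
          = P A (Classical.choose (step _ h1 ((i+1 : ℕ) : ℝ))) *ᵥ (P A (u i) *ᵥ x) := by
        rw [P_append, ← Matrix.mulVec_mulVec]
      rw [heq]
      refine ⟨hnotV, hge, ?_⟩
      rw [List.length_append]
      have : 1 ≤ (Classical.choose (step _ h1 ((i+1 : ℕ) : ℝ))).length :=
        List.length_pos_iff.mpr hne
      omega
  -- suffix chain
  have hchain : ∀ i, u i <:+ u (i + 1) := by
    intro i
    rw [husucc i]
    by_cases h : P A (u i) *ᵥ x ∉ V A
    · simp only [next, dif_pos h]
      exact ⟨_, rfl⟩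
    · simp only [next, dif_neg h]
      exact List.suffix_refl _
  have hmono : ∀ a b : ℕ, a ≤ b → u a <:+ u b := by
    intro a b hab
    induction b with
    | zero => rw [Nat.le_zero.mp hab]
    | succ b ihb =>
      rcases Nat.lt_or_ge a (b + 1) with h | h
      · exact (ihb (Nat.lt_succ_iff.mp h)).trans (hchain b)
      · rw [Nat.le_antisymm hab h]
  -- default letter
  have hu1 : u 1 ≠ [] := by
    have := (inv 1).2.2
    intro h
    rw [h] at this
    simp at this
  let b0 : Fin k := (u 1).head hu1
  -- the infinite sequence
  let r : ℕ → List (Fin k) := fun i => (u i).reverse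
  have hrmono : ∀ a b : ℕ, a ≤ b → r a <+: r b := by
    intro a b hab
    exact List.reverse_prefix.mpr (hmono a b hab)
  let j : ℕ → Fin k := fun m => (r (m + 1)).getD m b0
  have hkey : ∀ i : ℕ, ∀ p, ∀ hp : p < (r i).length, j p = (r i)[p] := by
    intro i p hp
    rcases Nat.le_total (p + 1) i with h | h
    · have hpre := hrmono (p + 1) i h
      have hlen : p < (r (p + 1)).length := by
        have h1 := (inv (p + 1)).2.2
        have : (r (p + 1)).length = (u (p + 1)).length := List.length_reverse
        omega
      show (r (p + 1)).getD p b0 = (r i)[p]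
      rw [List.getD_eq_getElem _ _ hlen]
      exact hpre.getElem hlen
    · have hpre := hrmono i (p + 1) h
      show (r (p + 1)).getD p b0 = (r i)[p]
      have hlen : p < (r (p + 1)).length := lt_of_lt_of_le hp hpre.length_le
      rw [List.getD_eq_getElem _ _ hlen]
      exact (hpre.getElem hp).symm
  have hword : ∀ i : ℕ, ((List.range (r i).length).reverse).map j = u i := by
    intro i
    have h1 : (List.range (r i).length).map j = r i := by
      apply List.ext_getElem
      · simp
      · intro p h1 h2
        have hp : p < (r i).length := by simpa using h2
        have : ((List.range (r i).length).map j)[p] = j p := by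
          simp
        rw [this]
        exact hkey i p hp
    calc ((List.range (r i).length).reverse).map j
        = ((List.range (r i).length).map j).reverse := List.map_reverse
      _ = (r i).reverse := by rw [h1]
      _ = u i := List.reverse_reverse _
  have hLP : ∀ i : ℕ, leftProd A j ((r i).length) = P A (u i) := by
    intro i
    rw [leftProd_eq, hword]
  -- contradiction with convergence
  obtain ⟨L, hL⟩ := hLCP j
  obtain ⟨N, hN⟩ := Metric.tendsto_atTop.mp hL 1 one_pos
  set c : ℝ := (n : ℝ) * ‖x‖ + ‖L *ᵥ x‖ with hc
  obtain ⟨i0, hi0⟩ := exists_nat_gt c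
  set i : ℕ := max i0 N with hi
  have hiN : N ≤ i := le_max_right _ _
  have hlen : N ≤ (r i).length := by
    have h1 := (inv i).2.2
    have h2 : (r i).length = (u i).length := List.length_reverse
    omega
  have hdist := hN ((r i).length) hlen
  rw [dist_eq_norm] at hdist
  have hbound : ‖leftProd A j ((r i).length) *ᵥ x‖ ≤ c := by
    have hsplit : leftProd A j ((r i).length) *ᵥ x
        = (leftProd A j ((r i).length) - L) *ᵥ x + L *ᵥ x := by
      rw [Matrix.sub_mulVec]; abel
    rw [hsplit]
    calc ‖(leftProd A j ((r i).length) - L) *ᵥ x + L *ᵥ x‖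
        ≤ ‖(leftProd A j ((r i).length) - L) *ᵥ x‖ + ‖L *ᵥ x‖ := norm_add_le _ _
      _ ≤ (n : ℝ) * ‖leftProd A j ((r i).length) - L‖ * ‖x‖ + ‖L *ᵥ x‖ := by
          have := mulVec_norm_le (leftProd A j ((r i).length) - L) x
          linarith
      _ ≤ (n : ℝ) * 1 * ‖x‖ + ‖L *ᵥ x‖ := by
          have hx0 : (0:ℝ) ≤ ‖x‖ := norm_nonneg _
          have hn0 : (0:ℝ) ≤ (n:ℝ) := Nat.cast_nonneg _
          nlinarith [mul_nonneg hn0 hx0, hdist]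
      _ = c := by rw [hc]; ring
  have hbig : (i : ℝ) ≤ ‖leftProd A j ((r i).length) *ᵥ x‖ := by
    rw [hLP i]
    exact (inv i).2.1
  have hii0 : (i0 : ℝ) ≤ (i : ℝ) := by
    exact_mod_cast le_max_left i0 N
  linarith

end LCPaux

/-- if Σ is LCP then Σ is product bounded: there is a `C > 0`
bounding the norm of every finite product of matrices from Σ (the empty
product, the identity matrix, included). -/
theorem lcp_product_bounded {n k : ℕ}
    (A : Fin k → Matrix (Fin n) (Fin n) ℝ) (hLCP : IsLCP A) :
    ∃ C : ℝ, 0 < C ∧ ∀ l : List (Fin k), ‖(l.map A).prod‖ < C := by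
  classical
  have hV := LCPaux.lemC A hLCP
  have hcol : ∀ q : Fin n, ∃ B : ℝ, 0 ≤ B ∧
      ∀ l : List (Fin k), ‖LCPaux.P A l *ᵥ Pi.single q 1‖ ≤ B := by
    intro q
    obtain ⟨B, hB⟩ := hV (Pi.single q 1)
    exact ⟨max B 0, le_max_right _ _, fun l => (hB l).trans (le_max_left _ _)⟩
  choose B hB0 hB using hcol
  have hsum : (0:ℝ) ≤ ∑ q, B q := Finset.sum_nonneg fun q _ => hB0 q
  refine ⟨(∑ q, B q) + 1, by linarith, fun l => ?_⟩
  have h1 : ‖(l.map A).prod‖ ≤ ∑ q, B q := by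
    rw [Matrix.norm_le_iff hsum]
    intro p q
    have hPl : (l.map A).prod = LCPaux.P A l := rfl
    have hentry : (l.map A).prod p q = (LCPaux.P A l *ᵥ Pi.single q 1) p := by
      rw [Matrix.mulVec_single, hPl]
      simp
    rw [hentry]
    calc ‖(LCPaux.P A l *ᵥ Pi.single q 1) p‖
        ≤ ‖LCPaux.P A l *ᵥ Pi.single q 1‖ := norm_le_pi_norm _ p
      _ ≤ B q := hB q l
      _ ≤ ∑ q', B q' := Finset.single_le_sum (fun q' _ => hB0 q') (Finset.mem_univ q)
  linarith
end
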